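/- arXiv:2006.11131 — 7 statements merged into one kernel-verified Lean document; each statement's English description precedes it below -/
import Mathlib

section
/- For every real x ≥ 0 and every integer n ≥ 1, assuming H_{t₁}(1,1) = H_{t₂}(1,1) = 1, one has Σ_{k₁=0}^∞ Σ_{k₂=0}^∞ (k₁+k₂)²·S_{k₁,k₂}(nx/2)/(k₁!·k₂!) = [n²x²·A(1,1) + n·x·( (A(1,1)·H_{t₁,t₁}(1,1) + A(1,1)·H_{t₂,t₂}(1,1))/2 + A(1,1)·H_{t₁,t₂}(1,1) + 2·A_{t₁}(1,1) + 2·A_{t₂}(1,1) + A(1,1) ) + A_{t₁,t₁}(1,1) + A_{t₂,t₂}(1,1) + 2·A_{t₁,t₂}(1,1) + A_{t₁}(1,1) + A_{t₂}(1,1)]·e^{(nx/2)·H(1,1)}. -/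
/-- First-order partial derivative with respect to the first variable. -/
noncomputable def pd1 (F : ℝ × ℝ → ℝ) (p : ℝ × ℝ) : ℝ := fderiv ℝ F p (1, 0)

/-- First-order partial derivative with respect to the second variable. -/
noncomputable def pd2 (F : ℝ × ℝ → ℝ) (p : ℝ × ℝ) : ℝ := fderiv ℝ F p (0, 1)

/-- Geometric domination of polynomial factors. -/
lemma aux_geom_bound (j : ℕ) {r ρ : ℝ} (h0 : 0 < r) (hrρ : r < ρ) :
    ∃ C : ℝ, 0 ≤ C ∧ ∀ M : ℕ, (M : ℝ) ^ j * r ^ M ≤ C * ρ ^ M := by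
  have hρ : 0 < ρ := h0.trans hrρ
  have hq : ‖r / ρ‖ < 1 := by
    rw [Real.norm_eq_abs, abs_of_pos (div_pos h0 hρ)]
    exact (div_lt_one hρ).2 hrρ
  have hs : Summable (fun M : ℕ => (M : ℝ) ^ j * (r / ρ) ^ M) :=
    summable_pow_mul_geometric_of_norm_lt_one j hq
  obtain ⟨C, hC⟩ := hs.tendsto_atTop_zero.bddAbove_range
  refine ⟨C, ?_, fun M => ?_⟩
  · rcases Nat.eq_zero_or_pos j with hj | hj
    · have h0' := hC ⟨0, rfl⟩
      simp [hj] at h0'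
      linarith
    · have h1' := hC ⟨1, rfl⟩
      simp at h1'
      have : 0 < r / ρ := div_pos h0 hρ
      linarith
  · have h1 : (M : ℝ) ^ j * (r / ρ) ^ M ≤ C := hC ⟨M, rfl⟩
    have h2 : (M : ℝ) ^ j * r ^ M = ((M : ℝ) ^ j * (r / ρ) ^ M) * ρ ^ M := by
      rw [div_pow, mul_assoc, div_mul_cancel₀]
      exact pow_ne_zero _ hρ.ne'
    rw [h2]
    exact mul_le_mul_of_nonneg_right h1 (pow_nonneg hρ.le M)

set_option maxHeartbeats 1000000 in
/-- the second-moment identity for the multiple Sheffer generating function. -/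
theorem multiple_sheffer_sum_e2
    (R₁ R₂ : ℝ) (hR₁ : 1 < R₁) (hR₂ : 1 < R₂)
    (A H : ℝ × ℝ → ℝ)
    (hA : AnalyticOn ℝ A {p : ℝ × ℝ | |p.1| < R₁ ∧ |p.2| < R₂})
    (hH : AnalyticOn ℝ H {p : ℝ × ℝ | |p.1| < R₁ ∧ |p.2| < R₂})
    (hA0 : A (0, 0) ≠ 0) (hH0 : H (0, 0) ≠ 0)
    (S : ℕ → ℕ → Polynomial ℝ)
    (hgen : ∀ x : ℝ, 0 ≤ x → ∀ t₁ t₂ : ℝ, |t₁| < R₁ → |t₂| < R₂ →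
      Summable (fun k : ℕ × ℕ =>
        (S k.1 k.2).eval x * t₁ ^ k.1 * t₂ ^ k.2 / (k.1.factorial * k.2.factorial)) ∧
      A (t₁, t₂) * Real.exp (x * H (t₁, t₂)) =
        ∑' k : ℕ × ℕ,
          (S k.1 k.2).eval x * t₁ ^ k.1 * t₂ ^ k.2 / (k.1.factorial * k.2.factorial))
    (hsum1 : ∀ y : ℝ, 0 ≤ y → Summable (fun k : ℕ × ℕ =>
      (k.1 + k.2 : ℝ) * (S k.1 k.2).eval y / (k.1.factorial * k.2.factorial)))
    (hsum2 : ∀ y : ℝ, 0 ≤ y → Summable (fun k : ℕ × ℕ =>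
      ((k.1 + k.2 : ℝ)) ^ 2 * (S k.1 k.2).eval y / (k.1.factorial * k.2.factorial)))
    (hH1 : pd1 H (1, 1) = 1) (hH2 : pd2 H (1, 1) = 1)
    (x : ℝ) (hx : 0 ≤ x) (n : ℕ) (hn : 1 ≤ n) :
    ∑' k : ℕ × ℕ,
        ((k.1 + k.2 : ℝ)) ^ 2 * (S k.1 k.2).eval (n * x / 2) /
          (k.1.factorial * k.2.factorial) =
      ((n : ℝ) ^ 2 * x ^ 2 * A (1, 1) +
          n * x * ((A (1, 1) * pd1 (pd1 H) (1, 1) + A (1, 1) * pd2 (pd2 H) (1, 1)) / 2 +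
            A (1, 1) * pd2 (pd1 H) (1, 1) + 2 * pd1 A (1, 1) + 2 * pd2 A (1, 1) + A (1, 1)) +
          pd1 (pd1 A) (1, 1) + pd2 (pd2 A) (1, 1) + 2 * pd2 (pd1 A) (1, 1) +
          pd1 A (1, 1) + pd2 A (1, 1)) *
        Real.exp ((n * x / 2) * H (1, 1)) := by
  classical
  set y : ℝ := (n : ℝ) * x / 2 with hy_def
  have hy : 0 ≤ y := by positivity
  -- radii
  set R : ℝ := min R₁ R₂ with hR_def
  have hR : 1 < R := lt_min hR₁ hR₂
  set ρ : ℝ := (1 + R) / 2 with hρ_def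
  set r : ℝ := (1 + ρ) / 2 with hr_def
  have h1ρ : 1 < ρ := by simp only [hρ_def]; linarith
  have hρR : ρ < R := by simp only [hρ_def]; linarith
  have h1r : 1 < r := by simp only [hr_def]; linarith
  have hrρ : r < ρ := by simp only [hr_def]; linarith
  have hr0 : 0 < r := by linarith
  have habs : ∀ t : ℝ, |t| < R → |t| < R₁ ∧ |t| < R₂ :=
    fun t ht => ⟨ht.trans_le (min_le_left _ _), ht.trans_le (min_le_right _ _)⟩
  -- the open polydisc
  set U : Set (ℝ × ℝ) := {p : ℝ × ℝ | |p.1| < R₁ ∧ |p.2| < R₂} with hU_def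
  have hUopen : IsOpen U := by
    have h1 : IsOpen {p : ℝ × ℝ | |p.1| < R₁} :=
      isOpen_lt (continuous_abs.comp continuous_fst) continuous_const
    have h2 : IsOpen {p : ℝ × ℝ | |p.2| < R₂} :=
      isOpen_lt (continuous_abs.comp continuous_snd) continuous_const
    exact h1.inter h2
  have hA' : AnalyticOnNhd ℝ A U := (hUopen.analyticOn_iff_analyticOnNhd).1 hA
  have hH' : AnalyticOnNhd ℝ H U := (hUopen.analyticOn_iff_analyticOnNhd).1 hH
  have hmemU : ∀ t : ℝ, |t| < R → ((t, t) : ℝ × ℝ) ∈ U :=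
    fun t ht => ⟨(habs t ht).1, (habs t ht).2⟩
  have hU1 : ((1 : ℝ), (1 : ℝ)) ∈ U := hmemU 1 (by rw [abs_one]; exact hR)
  -- coefficients
  set c : ℕ × ℕ → ℝ := fun k => (S k.1 k.2).eval y / ((k.1.factorial : ℝ) * k.2.factorial)
    with hc_def
  set m : ℕ × ℕ → ℕ := fun k => k.1 + k.2 with hm_def
  have hterm : ∀ (t : ℝ) (k : ℕ × ℕ),
      (S k.1 k.2).eval y * t ^ k.1 * t ^ k.2 / ((k.1.factorial : ℝ) * k.2.factorial)
        = c k * t ^ m k := by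
    intro t k
    simp only [hc_def, hm_def, pow_add]
    ring
  -- summability of |c| ρ^m
  have hcρ : Summable (fun k : ℕ × ℕ => |c k| * ρ ^ m k) := by
    have hρR₁ : |ρ| < R₁ := (habs ρ (by rwa [abs_of_pos (by linarith)])).1
    have hρR₂ : |ρ| < R₂ := (habs ρ (by rwa [abs_of_pos (by linarith)])).2
    have h := (hgen y hy ρ ρ hρR₁ hρR₂).1
    have h2 : Summable (fun k : ℕ × ℕ => c k * ρ ^ m k) := by
      refine h.congr fun k => hterm ρ k
    have h3 := h2.abs
    refine h3.congr fun k => ?_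
    rw [abs_mul, abs_pow, abs_of_pos (by linarith : (0:ℝ) < ρ)]
  -- summable majorants
  have hmaj : ∀ j : ℕ, Summable (fun k : ℕ × ℕ => ((m k : ℝ)) ^ j * |c k| * r ^ m k) := by
    intro j
    obtain ⟨C, hC0, hC⟩ := aux_geom_bound j hr0 hrρ
    refine Summable.of_nonneg_of_le (fun k => by positivity) (fun k => ?_) (hcρ.mul_left C)
    have := hC (m k)
    calc ((m k : ℝ)) ^ j * |c k| * r ^ m k = ((m k : ℝ) ^ j * r ^ m k) * |c k| := by ring
      _ ≤ (C * ρ ^ m k) * |c k| := mul_le_mul_of_nonneg_right this (abs_nonneg _)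
      _ = C * (|c k| * ρ ^ m k) := by ring
  -- the three series
  set f : ℕ × ℕ → ℝ → ℝ := fun k t => c k * t ^ m k with hf_def
  set f1 : ℕ × ℕ → ℝ → ℝ := fun k t => c k * ((m k : ℝ) * t ^ (m k - 1)) with hf1_def
  set f2 : ℕ × ℕ → ℝ → ℝ :=
    fun k t => c k * ((m k : ℝ) * (((m k - 1 : ℕ) : ℝ) * t ^ (m k - 1 - 1))) with hf2_def
  have hder1 : ∀ (k : ℕ × ℕ) (t : ℝ), HasDerivAt (f k) (f1 k t) t := by
    intro k t
    exact (hasDerivAt_pow (m k) t).const_mul (c k)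
  have hder2 : ∀ (k : ℕ × ℕ) (t : ℝ), HasDerivAt (f1 k) (f2 k t) t := by
    intro k t
    exact ((hasDerivAt_pow (m k - 1) t).const_mul ((m k : ℝ))).const_mul (c k)
  -- bounds
  have habs_t : ∀ t : ℝ, t ∈ Set.Ioo (-r) r → |t| ≤ r :=
    fun t ht => le_of_lt (abs_lt.2 ⟨ht.1, ht.2⟩)
  have hpow : ∀ (t : ℝ), t ∈ Set.Ioo (-r) r → ∀ i j : ℕ, i ≤ j → |t| ^ i ≤ r ^ j := by
    intro t ht i j hij
    calc |t| ^ i ≤ r ^ i := pow_le_pow_left₀ (abs_nonneg t) (habs_t t ht) i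
      _ ≤ r ^ j := pow_le_pow_right₀ (by linarith) hij
  have hb1 : ∀ (k : ℕ × ℕ) (t : ℝ), t ∈ Set.Ioo (-r) r →
      ‖f1 k t‖ ≤ ((m k : ℝ)) ^ 1 * |c k| * r ^ m k := by
    intro k t ht
    have : ‖f1 k t‖ = |c k| * ((m k : ℝ) * |t| ^ (m k - 1)) := by
      simp only [hf1_def, Real.norm_eq_abs, abs_mul, abs_pow, Nat.abs_cast]
    rw [this, pow_one]
    have h1 : |t| ^ (m k - 1) ≤ r ^ m k := hpow t ht _ _ (Nat.sub_le _ _)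
    calc |c k| * ((m k : ℝ) * |t| ^ (m k - 1))
        = ((m k : ℝ) * |c k|) * |t| ^ (m k - 1) := by ring
      _ ≤ ((m k : ℝ) * |c k|) * r ^ m k := mul_le_mul_of_nonneg_left h1 (by positivity)
      _ = (m k : ℝ) * |c k| * r ^ m k := by ring
  have hb2 : ∀ (k : ℕ × ℕ) (t : ℝ), t ∈ Set.Ioo (-r) r →
      ‖f2 k t‖ ≤ ((m k : ℝ)) ^ 2 * |c k| * r ^ m k := by
    intro k t ht
    have he : ‖f2 k t‖ = |c k| * ((m k : ℝ) * (((m k - 1 : ℕ) : ℝ) * |t| ^ (m k - 1 - 1))) := by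
      simp only [hf2_def, Real.norm_eq_abs, abs_mul, abs_pow, Nat.abs_cast]
    rw [he, sq]
    have h1 : |t| ^ (m k - 1 - 1) ≤ r ^ m k :=
      hpow t ht _ _ (le_trans (Nat.sub_le _ _) (Nat.sub_le _ _))
    have h2 : ((m k - 1 : ℕ) : ℝ) ≤ (m k : ℝ) := Nat.cast_le.2 (Nat.sub_le _ _)
    calc |c k| * ((m k : ℝ) * (((m k - 1 : ℕ) : ℝ) * |t| ^ (m k - 1 - 1)))
        = ((m k : ℝ) * ((m k - 1 : ℕ) : ℝ) * |c k|) * |t| ^ (m k - 1 - 1) := by ring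
      _ ≤ ((m k : ℝ) * ((m k - 1 : ℕ) : ℝ) * |c k|) * r ^ m k :=
          mul_le_mul_of_nonneg_left h1 (by positivity)
      _ ≤ ((m k : ℝ) * (m k : ℝ) * |c k|) * r ^ m k := by
          have hrm : (0:ℝ) ≤ r ^ m k := by positivity
          have h3 := mul_le_mul_of_nonneg_left h2 (Nat.cast_nonneg (α := ℝ) (m k))
          have h5 := mul_le_mul_of_nonneg_right h3 (mul_nonneg (abs_nonneg (c k)) hrm)
          nlinarith [h5]
      _ = (m k : ℝ) * (m k : ℝ) * |c k| * r ^ m k := by ring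
  -- summability at the base point 1
  have h1mem : (1 : ℝ) ∈ Set.Ioo (-r) r := ⟨by linarith, by linarith⟩
  have hg0 : Summable (fun k : ℕ × ℕ => f k 1) := by
    have h1R₁ : |(1:ℝ)| < R₁ := by rw [abs_one]; exact hR₁
    have h1R₂ : |(1:ℝ)| < R₂ := by rw [abs_one]; exact hR₂
    exact ((hgen y hy 1 1 h1R₁ h1R₂).1).congr fun k => hterm 1 k
  have hg0' : Summable (fun k : ℕ × ℕ => f1 k 1) :=
    Summable.of_norm_bounded (hmaj 1) (fun k => hb1 k 1 h1mem)
  have hg0'' : Summable (fun k : ℕ × ℕ => f2 k 1) :=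
    Summable.of_norm_bounded (hmaj 2) (fun k => hb2 k 1 h1mem)
  -- term-by-term differentiation
  set F : ℝ → ℝ := fun t => ∑' k : ℕ × ℕ, f k t with hF_def
  set G : ℝ → ℝ := fun t => ∑' k : ℕ × ℕ, f1 k t with hG_def
  have hFder : ∀ t ∈ Set.Ioo (-r) r, HasDerivAt F (G t) t := by
    intro t ht
    exact hasDerivAt_tsum_of_isPreconnected (hmaj 1) isOpen_Ioo isPreconnected_Ioo
      (fun k u _ => hder1 k u) hb1 h1mem hg0 ht
  have hGder : ∀ t ∈ Set.Ioo (-r) r, HasDerivAt G (∑' k : ℕ × ℕ, f2 k t) t := by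
    intro t ht
    exact hasDerivAt_tsum_of_isPreconnected (hmaj 2) isOpen_Ioo isPreconnected_Ioo
      (fun k u _ => hder2 k u) hb2 h1mem hg0' ht
  -- the closed-form function
  set Φ : ℝ → ℝ := fun t => A (t, t) * Real.exp (y * H (t, t)) with hΦ_def
  have hFΦ : Set.EqOn F Φ (Set.Ioo (-r) r) := by
    intro t ht
    have htR : |t| < R := lt_of_le_of_lt (habs_t t ht) (by linarith)
    have h := (hgen y hy t t (habs t htR).1 (habs t htR).2).2
    simp only [hF_def, hΦ_def]
    rw [h]
    exact tsum_congr fun k => (hterm t k).symm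
  -- derivative of Φ via the chain rule
  have hdiag : ∀ t : ℝ, HasDerivAt (fun u : ℝ => ((u, u) : ℝ × ℝ)) (1, 1) t :=
    fun t => (hasDerivAt_id t).prodMk (hasDerivAt_id t)
  set a' : ℝ → ℝ := fun t => fderiv ℝ A (t, t) (1, 1) with ha'_def
  set h' : ℝ → ℝ := fun t => fderiv ℝ H (t, t) (1, 1) with hh'_def
  have hαder : ∀ t : ℝ, |t| < R → HasDerivAt (fun u : ℝ => A (u, u)) (a' t) t := by
    intro t ht
    have h0 := HasFDerivAt.comp_hasDerivAt_of_eq t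
      ((hA' _ (hmemU t ht)).differentiableAt.hasFDerivAt) (hdiag t) rfl
    exact h0
  have hηder : ∀ t : ℝ, |t| < R → HasDerivAt (fun u : ℝ => H (u, u)) (h' t) t := by
    intro t ht
    have h0 := HasFDerivAt.comp_hasDerivAt_of_eq t
      ((hH' _ (hmemU t ht)).differentiableAt.hasFDerivAt) (hdiag t) rfl
    exact h0
  set Ψ : ℝ → ℝ := fun t => a' t * Real.exp (y * H (t, t))
    + A (t, t) * (Real.exp (y * H (t, t)) * (y * h' t)) with hΨ_def
  have hΦder : ∀ t : ℝ, |t| < R → HasDerivAt Φ (Ψ t) t := by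
    intro t ht
    exact (hαder t ht).mul (((hηder t ht).const_mul y).exp)
  -- identify G with Ψ on the interval
  have hGΨ : ∀ t ∈ Set.Ioo (-r) r, G t = Ψ t := by
    intro t ht
    have htR : |t| < R := lt_of_le_of_lt (habs_t t ht) (by linarith)
    have h1 : HasDerivAt Φ (G t) t :=
      (hFder t ht).congr_of_eventuallyEq
        (Filter.eventuallyEq_of_mem (isOpen_Ioo.mem_nhds ht) fun u hu => (hFΦ hu).symm)
    exact h1.unique (hΦder t htR)
  -- second derivatives of A and H
  set D2A : (ℝ × ℝ) →L[ℝ] (ℝ × ℝ) →L[ℝ] ℝ := fderiv ℝ (fderiv ℝ A) (1, 1) with hD2A_def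
  set D2H : (ℝ × ℝ) →L[ℝ] (ℝ × ℝ) →L[ℝ] ℝ := fderiv ℝ (fderiv ℝ H) (1, 1) with hD2H_def
  have hdfA : DifferentiableAt ℝ (fderiv ℝ A) (1, 1) :=
    ((hA' (1,1) hU1).fderiv).differentiableAt
  have hdfH : DifferentiableAt ℝ (fderiv ℝ H) (1, 1) :=
    ((hH' (1,1) hU1).fderiv).differentiableAt
  -- derivative of t ↦ fderiv F (t,t) v at 1
  have hclm : ∀ (Z : ℝ × ℝ → ℝ), DifferentiableAt ℝ (fderiv ℝ Z) (1, 1) →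
      ∀ v : ℝ × ℝ, HasDerivAt (fun t : ℝ => fderiv ℝ Z (t, t) v)
        (fderiv ℝ (fderiv ℝ Z) (1, 1) (1, 1) v) 1 := by
    intro Z hZ v
    have hB : HasFDerivAt (fun p : ℝ × ℝ => fderiv ℝ Z p v)
        (((fderiv ℝ Z (1,1)).comp (0 : (ℝ × ℝ) →L[ℝ] (ℝ × ℝ)))
          + (fderiv ℝ (fderiv ℝ Z) (1, 1)).flip v) (1, 1) :=
      hZ.hasFDerivAt.clm_apply (hasFDerivAt_const v (1, 1))
    have h2 := HasFDerivAt.comp_hasDerivAt_of_eq (1:ℝ) hB (hdiag 1) rfl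
    exact h2.congr_deriv (by simp [ContinuousLinearMap.flip_apply])
  have ha'der : HasDerivAt a' (D2A (1, 1) (1, 1)) 1 := hclm A hdfA (1, 1)
  have hh'der : HasDerivAt h' (D2H (1, 1) (1, 1)) 1 := hclm H hdfH (1, 1)
  -- derivative of Ψ at 1
  have h1R : |(1:ℝ)| < R := by rw [abs_one]; exact hR
  have hEder : HasDerivAt (fun t : ℝ => Real.exp (y * H (t, t)))
      (Real.exp (y * H (1, 1)) * (y * h' 1)) 1 := ((hηder 1 h1R).const_mul y).exp
  have hΨder : HasDerivAt Ψ
      ((D2A (1, 1) (1, 1) * Real.exp (y * H (1, 1))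
          + a' 1 * (Real.exp (y * H (1, 1)) * (y * h' 1)))
        + (a' 1 * (Real.exp (y * H (1, 1)) * (y * h' 1))
          + A (1, 1) * ((Real.exp (y * H (1, 1)) * (y * h' 1)) * (y * h' 1)
            + Real.exp (y * H (1, 1)) * (y * D2H (1, 1) (1, 1))))) 1 := by
    exact (ha'der.mul hEder).add
      ((hαder 1 h1R).mul (hEder.mul (hh'der.const_mul y)))

  -- identify the second derivative sum
  have hT : (∑' k : ℕ × ℕ, f2 k 1)
      = ((D2A (1, 1) (1, 1) * Real.exp (y * H (1, 1))
          + a' 1 * (Real.exp (y * H (1, 1)) * (y * h' 1)))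
        + (a' 1 * (Real.exp (y * H (1, 1)) * (y * h' 1))
          + A (1, 1) * ((Real.exp (y * H (1, 1)) * (y * h' 1)) * (y * h' 1)
            + Real.exp (y * H (1, 1)) * (y * D2H (1, 1) (1, 1))))) := by
    have hΨG : HasDerivAt Ψ (∑' k : ℕ × ℕ, f2 k 1) 1 :=
      (hGder 1 h1mem).congr_of_eventuallyEq
        (Filter.eventuallyEq_of_mem (isOpen_Ioo.mem_nhds h1mem) fun u hu => (hGΨ u hu).symm)
    exact hΨG.unique hΨder
  -- linear expansions
  have hvadd : ((1, 0) : ℝ × ℝ) + ((0, 1) : ℝ × ℝ) = (1, 1) := by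
    norm_num [Prod.mk_add_mk]
  have ha'1 : a' 1 = pd1 A (1, 1) + pd2 A (1, 1) := by
    simp only [ha'_def, pd1, pd2]
    rw [← hvadd, map_add]
  have hh'1 : h' 1 = 2 := by
    have : h' 1 = pd1 H (1, 1) + pd2 H (1, 1) := by
      simp only [hh'_def, pd1, pd2]
      rw [← hvadd, map_add]
    rw [this, hH1, hH2]; norm_num
  have hexpand : ∀ D : (ℝ × ℝ) →L[ℝ] (ℝ × ℝ) →L[ℝ] ℝ,
      D (1, 1) (1, 1) = D (1, 0) (1, 0) + D (1, 0) (0, 1) + D (0, 1) (1, 0) + D (0, 1) (0, 1) := by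
    intro D
    simp only [← hvadd, map_add, ContinuousLinearMap.add_apply]
    ring
  -- second partials via the bilinear second derivative
  have hpd : ∀ (Z : ℝ × ℝ → ℝ), DifferentiableAt ℝ (fderiv ℝ Z) (1, 1) → ∀ v w : ℝ × ℝ,
      fderiv ℝ (fun p : ℝ × ℝ => fderiv ℝ Z p v) (1, 1) w = fderiv ℝ (fderiv ℝ Z) (1, 1) w v := by
    intro Z hd v w
    rw [fderiv_clm_apply hd (differentiableAt_const v)]
    simp
  have eA11 : pd1 (pd1 A) (1, 1) = D2A (1, 0) (1, 0) := by
    show fderiv ℝ (fun p : ℝ × ℝ => fderiv ℝ A p (1, 0)) (1, 1) (1, 0) = D2A (1, 0) (1, 0)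
    rw [hpd A hdfA, hD2A_def]
  have eA12 : pd1 (pd2 A) (1, 1) = D2A (1, 0) (0, 1) := by
    show fderiv ℝ (fun p : ℝ × ℝ => fderiv ℝ A p (0, 1)) (1, 1) (1, 0) = D2A (1, 0) (0, 1)
    rw [hpd A hdfA, hD2A_def]
  have eA21 : pd2 (pd1 A) (1, 1) = D2A (0, 1) (1, 0) := by
    show fderiv ℝ (fun p : ℝ × ℝ => fderiv ℝ A p (1, 0)) (1, 1) (0, 1) = D2A (0, 1) (1, 0)
    rw [hpd A hdfA, hD2A_def]
  have eA22 : pd2 (pd2 A) (1, 1) = D2A (0, 1) (0, 1) := by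
    show fderiv ℝ (fun p : ℝ × ℝ => fderiv ℝ A p (0, 1)) (1, 1) (0, 1) = D2A (0, 1) (0, 1)
    rw [hpd A hdfA, hD2A_def]
  have eH11 : pd1 (pd1 H) (1, 1) = D2H (1, 0) (1, 0) := by
    show fderiv ℝ (fun p : ℝ × ℝ => fderiv ℝ H p (1, 0)) (1, 1) (1, 0) = D2H (1, 0) (1, 0)
    rw [hpd H hdfH, hD2H_def]
  have eH12 : pd1 (pd2 H) (1, 1) = D2H (1, 0) (0, 1) := by
    show fderiv ℝ (fun p : ℝ × ℝ => fderiv ℝ H p (0, 1)) (1, 1) (1, 0) = D2H (1, 0) (0, 1)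
    rw [hpd H hdfH, hD2H_def]
  have eH21 : pd2 (pd1 H) (1, 1) = D2H (0, 1) (1, 0) := by
    show fderiv ℝ (fun p : ℝ × ℝ => fderiv ℝ H p (1, 0)) (1, 1) (0, 1) = D2H (0, 1) (1, 0)
    rw [hpd H hdfH, hD2H_def]
  have eH22 : pd2 (pd2 H) (1, 1) = D2H (0, 1) (0, 1) := by
    show fderiv ℝ (fun p : ℝ × ℝ => fderiv ℝ H p (0, 1)) (1, 1) (0, 1) = D2H (0, 1) (0, 1)
    rw [hpd H hdfH, hD2H_def]
  -- symmetry of second derivatives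
  have hsymA : D2A (1, 0) (0, 1) = D2A (0, 1) (1, 0) := by
    have hc2 : ContDiffAt ℝ 2 A (1, 1) := (hA' (1, 1) hU1).contDiffAt
    have := hc2.isSymmSndFDerivAt (by simp)
    rw [hD2A_def]
    exact this (1, 0) (0, 1)
  have hsymH : D2H (1, 0) (0, 1) = D2H (0, 1) (1, 0) := by
    have hc2 : ContDiffAt ℝ 2 H (1, 1) := (hH' (1, 1) hU1).contDiffAt
    have := hc2.isSymmSndFDerivAt (by simp)
    rw [hD2H_def]
    exact this (1, 0) (0, 1)
  have hD2A11 : D2A (1, 1) (1, 1)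
      = pd1 (pd1 A) (1, 1) + pd2 (pd2 A) (1, 1) + 2 * pd2 (pd1 A) (1, 1) := by
    rw [hexpand D2A, eA11, eA22, ← eA21, hsymA, ← eA21]
    ring
  have hD2H11 : D2H (1, 1) (1, 1)
      = pd1 (pd1 H) (1, 1) + pd2 (pd2 H) (1, 1) + 2 * pd2 (pd1 H) (1, 1) := by
    rw [hexpand D2H, eH11, eH22, ← eH21, hsymH, ← eH21]
    ring
  -- rewrite the goal sum
  have hgoal_term : ∀ k : ℕ × ℕ,
      ((k.1 + k.2 : ℝ)) ^ 2 * (S k.1 k.2).eval y / (k.1.factorial * k.2.factorial)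
        = f2 k 1 + f1 k 1 := by
    intro k
    have hmk : ((k.1 : ℝ) + k.2) = (m k : ℝ) := by simp [hm_def]
    simp only [hf2_def, hf1_def, hc_def, one_pow, mul_one, hmk]
    rcases hcase : m k with _ | j
    · simp [hcase]
    · push_cast [Nat.succ_sub_one]
      ring
  have step1 : ∑' k : ℕ × ℕ,
      ((k.1 + k.2 : ℝ)) ^ 2 * (S k.1 k.2).eval y / (k.1.factorial * k.2.factorial)
        = ∑' k : ℕ × ℕ, (f2 k 1 + f1 k 1) := tsum_congr hgoal_term
  have step2 : ∑' k : ℕ × ℕ, (f2 k 1 + f1 k 1)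
      = (∑' k : ℕ × ℕ, f2 k 1) + ∑' k : ℕ × ℕ, f1 k 1 := Summable.tsum_add hg0'' hg0'
  have step3 : (∑' k : ℕ × ℕ, f1 k 1) = Ψ 1 := hGΨ 1 h1mem
  rw [step1, step2, step3, hT]
  simp only [hΨ_def]
  rw [hD2A11, hD2H11, ha'1, hh'1]
  rw [hy_def]
  ring
end

section
/- (Gavrea–Raşa inequality) Let a > 0 and let K be a positive linear operator on C([0,a], ℝ) (i.e. K is linear and K(g) ≥ 0 pointwise whenever g ≥ 0 pointwise) satisfying K(1;x) = 1 for all x ∈ [0,a], where 1 denotes the constant function 1. Then for every twice continuously differentiable function g : [0,a] → ℝ and every x ∈ [0,a], |K(g;x) − g(x)| ≤ ‖g'‖·√(K(ψ_x; x)) + (1/2)·‖g''‖·K(ψ_x; x), where ψ_x(s) = (s − x)² and ‖·‖ denotes the supremum norm on [0,a]. -/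
private lemma one_sided {a M x : ℝ} {h h' : ℝ → ℝ}
    (hx : x ∈ Set.Icc (0:ℝ) a)
    (hd : ∀ t ∈ Set.Icc (0:ℝ) a, HasDerivWithinAt h (h' t) (Set.Icc 0 a) t)
    (hb : ∀ t ∈ Set.Icc (0:ℝ) a, |h' t| ≤ M * |t - x|)
    (hhx : h x = 0) {s : ℝ} (hs : s ∈ Set.Icc (0:ℝ) a) :
    h s ≤ M / 2 * (s - x) ^ 2 := by
  set φ : ℝ → ℝ := fun t => M / 2 * (t - x) ^ 2 - h t with hφdef
  have hφd : ∀ t ∈ Set.Icc (0:ℝ) a,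
      HasDerivWithinAt φ (M * (t - x) - h' t) (Set.Icc 0 a) t := by
    intro t ht
    have h1 : HasDerivAt (fun t : ℝ => M / 2 * (t - x) ^ 2)
        (M / 2 * (2 * (t - x) ^ 1 * 1)) t :=
      (((hasDerivAt_id t).sub_const x).pow 2).const_mul _
    have h1' : HasDerivWithinAt (fun t : ℝ => M / 2 * (t - x) ^ 2)
        (M * (t - x)) (Set.Icc 0 a) t := by
      have := h1.hasDerivWithinAt (s := Set.Icc 0 a)
      exact this.congr_deriv (by ring)
    exact h1'.sub (hd t ht)
  have hφc : ContinuousOn φ (Set.Icc 0 a) :=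
    fun t ht => (hφd t ht).continuousWithinAt
  have hφx : φ x = M / 2 * (x - x) ^ 2 := by simp [hφdef, hhx]
  rcases le_total x s with hxs | hxs
  · -- x ≤ s : φ is monotone on [x,s]
    have hsub : Set.Icc x s ⊆ Set.Icc (0:ℝ) a := Set.Icc_subset_Icc hx.1 hs.2
    have mono : MonotoneOn φ (Set.Icc x s) := by
      apply monotoneOn_of_hasDerivWithinAt_nonneg (convex_Icc x s) (hφc.mono hsub)
        (f' := fun t => M * (t - x) - h' t)
      · intro t ht
        rw [interior_Icc] at ht ⊢
        have ht' : t ∈ Set.Icc (0:ℝ) a := ⟨hx.1.trans ht.1.le, ht.2.le.trans hs.2⟩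
        exact ((hφd t ht').hasDerivAt
          (Icc_mem_nhds (lt_of_le_of_lt hx.1 ht.1) (lt_of_lt_of_le ht.2 hs.2))).hasDerivWithinAt
      · intro t ht
        rw [interior_Icc] at ht
        have ht' : t ∈ Set.Icc (0:ℝ) a := ⟨hx.1.trans ht.1.le, ht.2.le.trans hs.2⟩
        have hbt := hb t ht'
        rw [abs_of_nonneg (sub_nonneg.2 ht.1.le)] at hbt
        have : h' t ≤ M * (t - x) := (le_abs_self _).trans hbt
        linarith
    have := mono ⟨le_rfl, hxs⟩ ⟨hxs, le_rfl⟩ hxs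
    rw [hφx] at this
    simp only [hφdef] at this
    nlinarith [this]
  · -- s ≤ x : φ is antitone on [s,x]
    have hsub : Set.Icc s x ⊆ Set.Icc (0:ℝ) a := Set.Icc_subset_Icc hs.1 hx.2
    have anti : AntitoneOn φ (Set.Icc s x) := by
      apply antitoneOn_of_hasDerivWithinAt_nonpos (convex_Icc s x) (hφc.mono hsub)
        (f' := fun t => M * (t - x) - h' t)
      · intro t ht
        rw [interior_Icc] at ht ⊢
        have ht' : t ∈ Set.Icc (0:ℝ) a := ⟨hs.1.trans ht.1.le, ht.2.le.trans hx.2⟩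
        exact ((hφd t ht').hasDerivAt
          (Icc_mem_nhds (lt_of_le_of_lt hs.1 ht.1) (lt_of_lt_of_le ht.2 hx.2))).hasDerivWithinAt
      · intro t ht
        rw [interior_Icc] at ht
        have ht' : t ∈ Set.Icc (0:ℝ) a := ⟨hs.1.trans ht.1.le, ht.2.le.trans hx.2⟩
        have hbt := hb t ht'
        rw [abs_of_nonpos (sub_nonpos.2 ht.2.le)] at hbt
        have : -h' t ≤ M * (x - t) := (neg_le_abs _).trans (by linarith)
        linarith
    have := anti ⟨le_rfl, hxs⟩ ⟨hxs, le_rfl⟩ hxs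
    rw [hφx] at this
    simp only [hφdef] at this
    nlinarith [this]

private lemma taylor2 {a M x : ℝ} {g g' g'' : ℝ → ℝ}
    (hg' : ∀ t ∈ Set.Icc (0 : ℝ) a, HasDerivWithinAt g (g' t) (Set.Icc 0 a) t)
    (hg'' : ∀ t ∈ Set.Icc (0 : ℝ) a, HasDerivWithinAt g' (g'' t) (Set.Icc 0 a) t)
    (hM : ∀ t ∈ Set.Icc (0:ℝ) a, |g'' t| ≤ M)
    (hx : x ∈ Set.Icc (0:ℝ) a) {s : ℝ} (hs : s ∈ Set.Icc (0:ℝ) a) :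
    |g s - g x - g' x * (s - x)| ≤ M / 2 * (s - x) ^ 2 := by
  set h : ℝ → ℝ := fun t => g t - g x - g' x * (t - x) with hhdef
  set h' : ℝ → ℝ := fun t => g' t - g' x with hh'def
  have hd : ∀ t ∈ Set.Icc (0:ℝ) a, HasDerivWithinAt h (h' t) (Set.Icc 0 a) t := by
    intro t ht
    have hlin : HasDerivWithinAt (fun t : ℝ => g' x * (t - x)) (g' x * 1) (Set.Icc 0 a) t :=
      (((hasDerivAt_id t).sub_const x).const_mul (g' x)).hasDerivWithinAt
    have := ((hg' t ht).sub_const (g x)).sub hlin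
    exact this.congr_deriv (by ring)
  have hb : ∀ t ∈ Set.Icc (0:ℝ) a, |h' t| ≤ M * |t - x| := by
    intro t ht
    have := (convex_Icc (0:ℝ) a).norm_image_sub_le_of_norm_hasDerivWithin_le
      (f := g') (f' := g'') hg'' (fun z hz => by simpa [Real.norm_eq_abs] using hM z hz) hx ht
    simpa [Real.norm_eq_abs, hh'def] using this
  have hhx : h x = 0 := by simp [hhdef]
  have h1 : h s ≤ M / 2 * (s - x) ^ 2 := one_sided hx hd hb hhx hs
  have h2 : -h s ≤ M / 2 * (s - x) ^ 2 := by
    have hd' : ∀ t ∈ Set.Icc (0:ℝ) a,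
        HasDerivWithinAt (fun t => -h t) (-h' t) (Set.Icc 0 a) t :=
      fun t ht => (hd t ht).neg
    have hb' : ∀ t ∈ Set.Icc (0:ℝ) a, |(-h' t)| ≤ M * |t - x| := by
      intro t ht; rw [abs_neg]; exact hb t ht
    exact one_sided hx hd' hb' (by simp [hhx]) hs
  rw [abs_le]; constructor <;> simp only [hhdef] at h1 h2 <;> linarith

/-- Gavrea–Raşa inequality: for a positive linear operator `K` on
`C([0,a],ℝ)` with `K(1;x) = 1`, and `g` twice continuously differentiable on `[0,a]`,
`|K(g;x) − g(x)| ≤ ‖g'‖·√(K(ψ_x;x)) + (1/2)·‖g''‖·K(ψ_x;x)` where `ψ_x(s) = (s−x)²`. -/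
theorem gavrea_rasa
    (a : ℝ) (ha : 0 < a)
    (K : C(Set.Icc (0 : ℝ) a, ℝ) →ₗ[ℝ] C(Set.Icc (0 : ℝ) a, ℝ))
    (hKpos : ∀ g : C(Set.Icc (0 : ℝ) a, ℝ), (∀ s, 0 ≤ g s) → ∀ x, 0 ≤ K g x)
    (hK1 : ∀ x, K (ContinuousMap.const _ 1) x = 1)
    (g g' g'' : ℝ → ℝ)
    (hgc : ContinuousOn g (Set.Icc 0 a))
    (hg' : ∀ s ∈ Set.Icc (0 : ℝ) a, HasDerivWithinAt g (g' s) (Set.Icc 0 a) s)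
    (hg'' : ∀ s ∈ Set.Icc (0 : ℝ) a, HasDerivWithinAt g' (g'' s) (Set.Icc 0 a) s)
    (hg''c : ContinuousOn g'' (Set.Icc 0 a))
    (x : Set.Icc (0 : ℝ) a) :
    |K ⟨(Set.Icc (0 : ℝ) a).restrict g, hgc.restrict⟩ x - g x| ≤
      (⨆ s : Set.Icc (0 : ℝ) a, |g' s|) *
          Real.sqrt (K ⟨fun s => ((s : ℝ) - (x : ℝ)) ^ 2, by fun_prop⟩ x) +
        1 / 2 * (⨆ s : Set.Icc (0 : ℝ) a, |g'' s|) *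
          K ⟨fun s => ((s : ℝ) - (x : ℝ)) ^ 2, by fun_prop⟩ x := by
  have hne : Nonempty (Set.Icc (0:ℝ) a) := ⟨x⟩
  have hg'c : ContinuousOn g' (Set.Icc (0:ℝ) a) := fun t ht => (hg'' t ht).continuousWithinAt
  have hM1bdd : BddAbove (Set.range fun s : Set.Icc (0:ℝ) a => |g' s|) := by
    have : Continuous fun s : Set.Icc (0:ℝ) a => |g' (s : ℝ)| :=
      (continuousOn_iff_continuous_restrict.1 hg'c).abs
    exact (isCompact_range this).bddAbove
  have hM2bdd : BddAbove (Set.range fun s : Set.Icc (0:ℝ) a => |g'' s|) := by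
    have : Continuous fun s : Set.Icc (0:ℝ) a => |g'' (s : ℝ)| :=
      (continuousOn_iff_continuous_restrict.1 hg''c).abs
    exact (isCompact_range this).bddAbove
  set M1 := ⨆ s : Set.Icc (0:ℝ) a, |g' s| with hM1def
  set M2 := ⨆ s : Set.Icc (0:ℝ) a, |g'' s| with hM2def
  have hM1 : ∀ s : Set.Icc (0:ℝ) a, |g' s| ≤ M1 := fun s => le_ciSup hM1bdd s
  have hM2 : ∀ s : Set.Icc (0:ℝ) a, |g'' s| ≤ M2 := fun s => le_ciSup hM2bdd s
  have hM1nn : 0 ≤ M1 := le_trans (abs_nonneg _) (hM1 x)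
  have hM2nn : 0 ≤ M2 := le_trans (abs_nonneg _) (hM2 x)
  -- the continuous maps involved
  let ψ : C(Set.Icc (0:ℝ) a, ℝ) := ⟨fun s => ((s : ℝ) - (x : ℝ)) ^ 2, by fun_prop⟩
  let e : C(Set.Icc (0:ℝ) a, ℝ) := ⟨fun s => ((s : ℝ) - (x : ℝ)), by fun_prop⟩
  let Gm : C(Set.Icc (0:ℝ) a, ℝ) := ⟨(Set.Icc (0:ℝ) a).restrict g, hgc.restrict⟩
  let one : C(Set.Icc (0:ℝ) a, ℝ) := ContinuousMap.const _ 1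
  have hψapp : ∀ s : Set.Icc (0:ℝ) a, ψ s = ((s : ℝ) - x) ^ 2 := fun s => rfl
  have heapp : ∀ s : Set.Icc (0:ℝ) a, e s = ((s : ℝ) - x) := fun s => rfl
  have honeapp : ∀ s : Set.Icc (0:ℝ) a, one s = 1 := fun s => rfl
  have hGmapp : ∀ s : Set.Icc (0:ℝ) a, Gm s = g s := fun s => rfl
  -- monotonicity of K
  have mono : ∀ f₁ f₂ : C(Set.Icc (0:ℝ) a, ℝ), (∀ s, f₁ s ≤ f₂ s) → K f₁ x ≤ K f₂ x := by
    intro f₁ f₂ hle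
    have h0 := hKpos (f₂ - f₁) (fun s => by
      simpa [ContinuousMap.sub_apply] using sub_nonneg.2 (hle s)) x
    rw [map_sub] at h0
    simpa [ContinuousMap.sub_apply, sub_nonneg] using h0
  set q : ℝ := K ψ x with hqdef
  have hqnn : 0 ≤ q := hKpos ψ (fun s => by rw [hψapp]; exact sq_nonneg _) x
  set u : ℝ := K e x with hudef
  -- Cauchy-Schwarz type bound: u^2 ≤ q
  have hu2 : u ^ 2 ≤ q := by
    set w : C(Set.Icc (0:ℝ) a, ℝ) := ψ - (2 * u) • e + (u ^ 2) • one with hwdef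
    have hwnn : ∀ s, 0 ≤ w s := by
      intro s
      have : w s = (((s : ℝ) - x) - u) ^ 2 := by
        simp only [hwdef, ContinuousMap.sub_apply, ContinuousMap.add_apply,
          ContinuousMap.smul_apply, hψapp, heapp, honeapp, smul_eq_mul]
        ring
      rw [this]; exact sq_nonneg _
    have h0 := hKpos w hwnn x
    have hKw : K w x = q - 2 * u * u + u ^ 2 := by
      rw [hwdef, map_add, map_sub, map_smul, map_smul]
      simp only [ContinuousMap.sub_apply, ContinuousMap.add_apply,
        ContinuousMap.smul_apply, smul_eq_mul]
      rw [hK1 x]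
      simp [hqdef, hudef]
    rw [hKw] at h0; nlinarith
  have huabs : |u| ≤ Real.sqrt q := by
    rw [← Real.sqrt_sq_eq_abs]
    exact Real.sqrt_le_sqrt hu2
  -- remainder
  set R : C(Set.Icc (0:ℝ) a, ℝ) := Gm - (g x) • one - (g' x) • e with hRdef
  have hRapp : ∀ s : Set.Icc (0:ℝ) a, R s = g s - g x - g' x * ((s : ℝ) - x) := by
    intro s
    simp only [hRdef, ContinuousMap.sub_apply, ContinuousMap.smul_apply,
      hGmapp, honeapp, heapp, smul_eq_mul, mul_one]
  have hRbound : ∀ s : Set.Icc (0:ℝ) a, |R s| ≤ M2 / 2 * ((s : ℝ) - x) ^ 2 := by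
    intro s
    rw [hRapp]
    exact taylor2 hg' hg'' (fun t ht => hM2 ⟨t, ht⟩) x.2 s.2
  have hKR : |K R x| ≤ M2 / 2 * q := by
    rw [abs_le]
    constructor
    · have := mono ((-(M2 / 2)) • ψ) R (fun s => by
        rw [ContinuousMap.smul_apply, hψapp, smul_eq_mul]
        nlinarith [hRbound s, neg_abs_le (R s)])
      rw [map_smul] at this
      rw [ContinuousMap.smul_apply, smul_eq_mul, ← hqdef] at this
      linarith
    · have := mono R ((M2 / 2) • ψ) (fun s => by
        rw [ContinuousMap.smul_apply, smul_eq_mul]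
        exact (le_abs_self _).trans (hRbound s))
      rw [map_smul] at this
      rw [ContinuousMap.smul_apply, smul_eq_mul, ← hqdef] at this
      linarith
  -- decomposition
  have hdecomp : K Gm x = K R x + g x + g' x * u := by
    have hGm : Gm = R + (g x) • one + (g' x) • e := by rw [hRdef]; ring
    rw [hGm, map_add, map_add, map_smul, map_smul]
    rw [ContinuousMap.add_apply, ContinuousMap.add_apply, ContinuousMap.smul_apply,
      ContinuousMap.smul_apply, smul_eq_mul, smul_eq_mul, hK1 x, hudef, mul_one]
  -- conclusion
  show |K Gm x - g x| ≤ M1 * Real.sqrt q + 1 / 2 * M2 * q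
  rw [hdecomp]
  have h1 : |K R x + g x + g' x * u - g x| ≤ |g' x * u| + |K R x| := by
    have h2 : K R x + g x + g' x * u - g x = g' x * u + K R x := by ring
    rw [h2]; exact abs_add_le _ _
  have h2 : |g' x * u| ≤ M1 * Real.sqrt q := by
    rw [abs_mul]
    exact mul_le_mul (hM1 x) huabs (abs_nonneg _) hM1nn
  calc |K R x + g x + g' x * u - g x| ≤ |g' x * u| + |K R x| := h1
    _ ≤ M1 * Real.sqrt q + 1 / 2 * M2 * q := by linarith
end

section
/- For every real x ≥ 0 and every integer n ≥ 1, e^{-2-nx}·Σ_{k₁=0}^∞ Σ_{k₂=0}^∞ ((nx/2 + 1)^{k₁+k₂}/(k₁!·k₂!))·((k₁+k₂)/n)² = x² + 5x/n + 6/n²; that is, G_n(e₂;x) = x² + 5x/n + 6/n² for the operator attached to the multiple Sheffer polynomials (x+1)^{k₁+k₂}. -/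
lemma S0_summable (y : ℝ) : Summable (fun k : ℕ => y ^ k / k.factorial) :=
  Real.summable_pow_div_factorial y

lemma S0_tsum (y : ℝ) : ∑' k : ℕ, y ^ k / k.factorial = Real.exp y := by
  rw [Real.exp_eq_exp_ℝ, NormedSpace.exp_eq_tsum_div]

lemma S1_summable (y : ℝ) : Summable (fun k : ℕ => (k : ℝ) * y ^ k / k.factorial) := by
  rw [← summable_nat_add_iff 1]
  have : (fun k : ℕ => ((k + 1 : ℕ) : ℝ) * y ^ (k + 1) / (k + 1).factorial)
      = fun k : ℕ => y * (y ^ k / k.factorial) := by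
    funext k
    have hk : ((k.factorial : ℝ)) ≠ 0 := Nat.cast_ne_zero.2 k.factorial_ne_zero
    rw [Nat.factorial_succ, pow_succ]
    push_cast
    field_simp
  rw [this]
  exact (S0_summable y).mul_left y

lemma S1_tsum (y : ℝ) : ∑' k : ℕ, (k : ℝ) * y ^ k / k.factorial = y * Real.exp y := by
  rw [Summable.tsum_eq_zero_add (S1_summable y)]
  have : (fun k : ℕ => ((k + 1 : ℕ) : ℝ) * y ^ (k + 1) / (k + 1).factorial)
      = fun k : ℕ => y * (y ^ k / k.factorial) := by
    funext k
    have hk : ((k.factorial : ℝ)) ≠ 0 := Nat.cast_ne_zero.2 k.factorial_ne_zero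
    rw [Nat.factorial_succ, pow_succ]
    push_cast
    field_simp
  simp only [this]
  rw [tsum_mul_left, S0_tsum]
  simp

lemma S2_aux (y : ℝ) : (fun k : ℕ => ((k + 1 : ℕ) : ℝ) ^ 2 * y ^ (k + 1) / (k + 1).factorial)
    = fun k : ℕ => y * ((k : ℝ) * y ^ k / k.factorial) + y * (y ^ k / k.factorial) := by
  funext k
  have hk : ((k.factorial : ℝ)) ≠ 0 := Nat.cast_ne_zero.2 k.factorial_ne_zero
  rw [Nat.factorial_succ, pow_succ]
  push_cast
  field_simp
  ring

lemma S2_summable (y : ℝ) : Summable (fun k : ℕ => (k : ℝ) ^ 2 * y ^ k / k.factorial) := by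
  rw [← summable_nat_add_iff 1]
  rw [show (fun k : ℕ => ((k + 1 : ℕ) : ℝ) ^ 2 * y ^ (k + 1) / (k + 1).factorial) = _ from S2_aux y]
  exact (((S1_summable y).mul_left y)).add ((S0_summable y).mul_left y)

lemma S2_tsum (y : ℝ) : ∑' k : ℕ, (k : ℝ) ^ 2 * y ^ k / k.factorial
    = (y ^ 2 + y) * Real.exp y := by
  rw [Summable.tsum_eq_zero_add (S2_summable y)]
  simp only [show (fun k : ℕ => ((k + 1 : ℕ) : ℝ) ^ 2 * y ^ (k + 1) / (k + 1).factorial) = _ from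
    S2_aux y]
  rw [Summable.tsum_add (((S1_summable y).mul_left y)) ((S0_summable y).mul_left y),
    tsum_mul_left, tsum_mul_left, S1_tsum, S0_tsum]
  push_cast
  ring

set_option maxHeartbeats 2000000 in
lemma main_sum (y : ℝ) (n : ℕ) :
    ∑' k : ℕ × ℕ, y ^ (k.1 + k.2) / (k.1.factorial * k.2.factorial) *
        ((k.1 + k.2 : ℝ) / n) ^ 2
      = (4 * y ^ 2 + 2 * y) / (n : ℝ) ^ 2 * (Real.exp y * Real.exp y) := by
  have hs0 := S0_summable y
  have hs1 := S1_summable y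
  have hs2 := S2_summable y
  have habs : ∀ f : ℕ → ℝ, Summable f → Summable (fun k => ‖f k‖) := fun f hf => hf.abs
  have hpt : ∀ k : ℕ × ℕ,
      y ^ (k.1 + k.2) / (k.1.factorial * k.2.factorial) * ((k.1 + k.2 : ℝ) / n) ^ 2
      = (1 / (n : ℝ) ^ 2) *
        (((k.1 : ℝ) ^ 2 * y ^ k.1 / k.1.factorial) * (y ^ k.2 / k.2.factorial))
        + (2 / (n : ℝ) ^ 2) *
        (((k.1 : ℝ) * y ^ k.1 / k.1.factorial) * ((k.2 : ℝ) * y ^ k.2 / k.2.factorial))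
        + (1 / (n : ℝ) ^ 2) *
        ((y ^ k.1 / k.1.factorial) * ((k.2 : ℝ) ^ 2 * y ^ k.2 / k.2.factorial)) := by
    rintro ⟨k1, k2⟩
    have h1 : ((k1.factorial : ℝ)) ≠ 0 := Nat.cast_ne_zero.2 k1.factorial_ne_zero
    have h2 : ((k2.factorial : ℝ)) ≠ 0 := Nat.cast_ne_zero.2 k2.factorial_ne_zero
    simp only [pow_add]
    by_cases hn : (n : ℝ) = 0
    · simp [hn]
    · field_simp
      ring
  rw [tsum_congr hpt]
  have hA : Summable (fun k : ℕ × ℕ =>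
      ((k.1 : ℝ) ^ 2 * y ^ k.1 / k.1.factorial) * (y ^ k.2 / k.2.factorial)) :=
    summable_mul_of_summable_norm (habs _ hs2) (habs _ hs0)
  have hB : Summable (fun k : ℕ × ℕ =>
      ((k.1 : ℝ) * y ^ k.1 / k.1.factorial) * ((k.2 : ℝ) * y ^ k.2 / k.2.factorial)) :=
    summable_mul_of_summable_norm (habs _ hs1) (habs _ hs1)
  have hC : Summable (fun k : ℕ × ℕ =>
      (y ^ k.1 / k.1.factorial) * ((k.2 : ℝ) ^ 2 * y ^ k.2 / k.2.factorial)) :=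
    summable_mul_of_summable_norm (habs _ hs0) (habs _ hs2)
  rw [Summable.tsum_add ((hA.mul_left _).add (hB.mul_left _)) (hC.mul_left _),
    Summable.tsum_add (hA.mul_left _) (hB.mul_left _), tsum_mul_left, tsum_mul_left, tsum_mul_left,
    ← tsum_mul_tsum_of_summable_norm (habs _ hs2) (habs _ hs0),
    ← tsum_mul_tsum_of_summable_norm (habs _ hs1) (habs _ hs1),
    ← tsum_mul_tsum_of_summable_norm (habs _ hs0) (habs _ hs2),
    S0_tsum, S1_tsum, S2_tsum]
  ring

set_option maxHeartbeats 1000000 in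
/-- `G_n(e₂;x) = x² + 5x/n + 6/n²` for the operator attached to the
multiple Sheffer polynomials `(x+1)^{k₁+k₂}`. -/
theorem Gxk_e2 (x : ℝ) (hx : 0 ≤ x) (n : ℕ) (hn : 1 ≤ n) :
    Real.exp (-2 - n * x) *
        ∑' k : ℕ × ℕ, (n * x / 2 + 1) ^ (k.1 + k.2) / (k.1.factorial * k.2.factorial) *
          ((k.1 + k.2 : ℝ) / n) ^ 2 =
      x ^ 2 + 5 * x / n + 6 / (n : ℝ) ^ 2 := by
  have hn0 : (n : ℝ) ≠ 0 := by positivity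
  rw [main_sum (n * x / 2 + 1) n]
  have hexp : Real.exp (-2 - n * x) * (Real.exp (n * x / 2 + 1) * Real.exp (n * x / 2 + 1)) = 1 := by
    rw [← Real.exp_add, ← Real.exp_add,
      show -2 - (n : ℝ) * x + ((n : ℝ) * x / 2 + 1 + ((n : ℝ) * x / 2 + 1)) = 0 by ring,
      Real.exp_zero]
  calc Real.exp (-2 - n * x) *
        ((4 * (n * x / 2 + 1) ^ 2 + 2 * (n * x / 2 + 1)) / (n : ℝ) ^ 2 *
          (Real.exp (n * x / 2 + 1) * Real.exp (n * x / 2 + 1)))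
      = (Real.exp (-2 - n * x) * (Real.exp (n * x / 2 + 1) * Real.exp (n * x / 2 + 1))) *
          ((4 * (n * x / 2 + 1) ^ 2 + 2 * (n * x / 2 + 1)) / (n : ℝ) ^ 2) := by ring
    _ = (4 * (n * x / 2 + 1) ^ 2 + 2 * (n * x / 2 + 1)) / (n : ℝ) ^ 2 := by rw [hexp, one_mul]
    _ = x ^ 2 + 5 * x / n + 6 / (n : ℝ) ^ 2 := by field_simp; ring
end

section
/- Let f : [0,∞) → ℝ be twice continuously differentiable with ‖f'‖ = sup_{y ≥ 0} |f'(y)| and ‖f''‖ = sup_{y ≥ 0} |f''(y)| both finite. Then for every integer n ≥ 1 and every x ≥ 0, |G_n(f;x) − f(x)| ≤ ‖f'‖·√(x/n + 6/n²) + (1/2)·‖f''‖·(x/n + 6/n²), where G_n is the operator attached to the multiple Sheffer polynomials (x+1)^{k₁+k₂}. -/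
open scoped Nat

lemma tsum_exp0 (a : ℝ) : ∑' k : ℕ, a ^ k / (k.factorial : ℝ) = Real.exp a := by
  rw [Real.exp_eq_exp_ℝ, NormedSpace.exp_eq_tsum_div]

lemma summable0 (a : ℝ) : Summable (fun k : ℕ => a ^ k / (k.factorial : ℝ)) :=
  Real.summable_pow_div_factorial a

lemma shift1 (a : ℝ) (m : ℕ) :
    ((m+1 : ℕ) : ℝ) * a ^ (m+1) / ((m+1).factorial : ℝ) = a * (a ^ m / (m.factorial : ℝ)) := by
  have h : ((m.factorial : ℝ)) ≠ 0 := Nat.cast_ne_zero.mpr m.factorial_ne_zero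
  have h1 : ((m : ℝ) + 1) ≠ 0 := by positivity
  rw [Nat.factorial_succ]
  push_cast
  field_simp
  ring

lemma summable1 (a : ℝ) : Summable (fun k : ℕ => (k : ℝ) * a ^ k / (k.factorial : ℝ)) := by
  rw [← summable_nat_add_iff 1]
  exact ((summable0 a).mul_left a).congr fun m => (shift1 a m).symm

lemma tsum_exp1 (a : ℝ) :
    ∑' k : ℕ, (k : ℝ) * a ^ k / (k.factorial : ℝ) = a * Real.exp a := by
  rw [Summable.tsum_eq_zero_add (summable1 a),
    tsum_congr (fun m => shift1 a m), tsum_mul_left, tsum_exp0]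
  norm_num

lemma shift2 (a : ℝ) (m : ℕ) :
    ((m+1 : ℕ) : ℝ)^2 * a ^ (m+1) / ((m+1).factorial : ℝ)
      = a * ((m : ℝ) * a ^ m / (m.factorial : ℝ)) + a * (a ^ m / (m.factorial : ℝ)) := by
  have h : ((m.factorial : ℝ)) ≠ 0 := Nat.cast_ne_zero.mpr m.factorial_ne_zero
  have h1 : ((m : ℝ) + 1) ≠ 0 := by positivity
  rw [Nat.factorial_succ]
  push_cast
  field_simp
  ring

lemma summable2 (a : ℝ) : Summable (fun k : ℕ => (k : ℝ)^2 * a ^ k / (k.factorial : ℝ)) := by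
  rw [← summable_nat_add_iff 1]
  exact (((summable1 a).mul_left a).add ((summable0 a).mul_left a)).congr
    fun m => (shift2 a m).symm

lemma tsum_exp2 (a : ℝ) :
    ∑' k : ℕ, (k : ℝ)^2 * a ^ k / (k.factorial : ℝ) = (a^2 + a) * Real.exp a := by
  rw [Summable.tsum_eq_zero_add (summable2 a),
    tsum_congr (fun m => shift2 a m),
    Summable.tsum_add (((summable1 a)).mul_left a) ((summable0 a).mul_left a),
    tsum_mul_left, tsum_mul_left, tsum_exp0, tsum_exp1]
  norm_num
  ring

lemma tsum_prod_mul (p q : ℕ → ℝ) (hp : Summable fun k => ‖p k‖) (hq : Summable fun k => ‖q k‖) :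
    ∑' z : ℕ × ℕ, p z.1 * q z.2 = (∑' k, p k) * (∑' k, q k) :=
  (tsum_mul_tsum_of_summable_norm hp hq).symm

/-- The Szász-type operator attached to the multiple Sheffer polynomials
`(x+1)^{k₁+k₂}` (the case `A(t₁,t₂) = e^{t₁+t₂}`, `H(t₁,t₂) = t₁+t₂`). -/
noncomputable def Gxk (n : ℕ) (f : ℝ → ℝ) (x : ℝ) : ℝ :=
  Real.exp (-2 - n * x) *
    ∑' k : ℕ × ℕ, (n * x / 2 + 1) ^ (k.1 + k.2) / (k.1.factorial * k.2.factorial) *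
      f ((k.1 + k.2 : ℝ) / n)

set_option maxHeartbeats 1000000 in
/-- for `f` twice continuously differentiable on `[0,∞)` with bounded
first and second derivatives,
`|G_n(f;x) − f(x)| ≤ ‖f'‖·√(x/n + 6/n²) + (1/2)·‖f''‖·(x/n + 6/n²)`. -/
theorem Gxk_error_bound
    (f f' f'' : ℝ → ℝ)
    (hf' : ∀ y ∈ Set.Ici (0 : ℝ), HasDerivWithinAt f (f' y) (Set.Ici 0) y)
    (hf'' : ∀ y ∈ Set.Ici (0 : ℝ), HasDerivWithinAt f' (f'' y) (Set.Ici 0) y)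
    (hf''c : ContinuousOn f'' (Set.Ici 0))
    (hb' : BddAbove (Set.range fun y : Set.Ici (0 : ℝ) => |f' y|))
    (hb'' : BddAbove (Set.range fun y : Set.Ici (0 : ℝ) => |f'' y|))
    (n : ℕ) (hn : 1 ≤ n) (x : ℝ) (hx : 0 ≤ x) :
    |Gxk n f x - f x| ≤
      (⨆ y : Set.Ici (0 : ℝ), |f' y|) * Real.sqrt (x / n + 6 / (n : ℝ) ^ 2) +
        1 / 2 * (⨆ y : Set.Ici (0 : ℝ), |f'' y|) * (x / n + 6 / (n : ℝ) ^ 2) := by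
  have hn0 : (0:ℝ) < n := by exact_mod_cast hn
  have hnne : (n:ℝ) ≠ 0 := ne_of_gt hn0
  set M1 : ℝ := ⨆ y : Set.Ici (0 : ℝ), |f' y| with hM1def
  set M2 : ℝ := ⨆ y : Set.Ici (0 : ℝ), |f'' y| with hM2def
  have hM1 : 0 ≤ M1 := le_trans (abs_nonneg _) (le_ciSup hb' ⟨0, Set.mem_Ici.mpr (le_refl 0)⟩)
  have hM2 : 0 ≤ M2 := le_trans (abs_nonneg _) (le_ciSup hb'' ⟨0, Set.mem_Ici.mpr (le_refl 0)⟩)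
  set V : ℝ := x / n + 6 / (n:ℝ)^2 with hVdef
  have hV : 0 < V := by rw [hVdef]; positivity
  set ε : ℝ := Real.sqrt V with hεdef
  have hε : 0 < ε := Real.sqrt_pos.mpr hV
  have hε2 : ε ^ 2 = V := Real.sq_sqrt hV.le
  set a : ℝ := (n:ℝ) * x / 2 + 1 with hadef
  have ha0 : 0 ≤ a := by rw [hadef]; positivity
  -- one-dimensional series
  have hfac : ∀ k : ℕ, ((k.factorial : ℝ)) ≠ 0 := fun k => Nat.cast_ne_zero.mpr k.factorial_ne_zero
  have hu0 : ∀ k : ℕ, 0 ≤ a ^ k / (k.factorial : ℝ) := fun k => by positivity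
  have hu10 : ∀ k : ℕ, 0 ≤ (k:ℝ) * a ^ k / (k.factorial : ℝ) := fun k => by positivity
  have hu20 : ∀ k : ℕ, 0 ≤ (k:ℝ)^2 * a ^ k / (k.factorial : ℝ) := fun k => by positivity
  have hun : Summable (fun k : ℕ => ‖a ^ k / (k.factorial : ℝ)‖) :=
    (summable0 a).congr fun k => (Real.norm_of_nonneg (hu0 k)).symm
  have hu1n : Summable (fun k : ℕ => ‖(k:ℝ) * a ^ k / (k.factorial : ℝ)‖) :=
    (summable1 a).congr fun k => (Real.norm_of_nonneg (hu10 k)).symm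
  have hu2n : Summable (fun k : ℕ => ‖(k:ℝ)^2 * a ^ k / (k.factorial : ℝ)‖) :=
    (summable2 a).congr fun k => (Real.norm_of_nonneg (hu20 k)).symm
  -- weights on ℕ × ℕ
  have hw0 : ∀ k : ℕ × ℕ, 0 ≤ a ^ k.1 / (k.1.factorial : ℝ) * (a ^ k.2 / (k.2.factorial : ℝ)) :=
    fun k => mul_nonneg (hu0 _) (hu0 _)
  have hw_sum : Summable (fun k : ℕ × ℕ =>
      a ^ k.1 / (k.1.factorial : ℝ) * (a ^ k.2 / (k.2.factorial : ℝ))) :=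
    summable_mul_of_summable_norm hun hun
  have hT0 : ∑' k : ℕ × ℕ, a ^ k.1 / (k.1.factorial : ℝ) * (a ^ k.2 / (k.2.factorial : ℝ))
      = Real.exp a * Real.exp a := by
    rw [tsum_prod_mul _ _ hun hun, tsum_exp0]
  -- second moment on ℕ × ℕ
  have hq_eq : ∀ k : ℕ × ℕ,
      a ^ k.1 / (k.1.factorial : ℝ) * (a ^ k.2 / (k.2.factorial : ℝ))
          * (((k.1:ℝ) + (k.2:ℝ)) / n - x)^2
        = (1/(n:ℝ)^2) * ((k.1:ℝ)^2 * a ^ k.1 / (k.1.factorial : ℝ) * (a ^ k.2 / (k.2.factorial : ℝ)))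
          + (2/(n:ℝ)^2) * ((k.1:ℝ) * a ^ k.1 / (k.1.factorial : ℝ) * ((k.2:ℝ) * a ^ k.2 / (k.2.factorial : ℝ)))
          + (1/(n:ℝ)^2) * (a ^ k.1 / (k.1.factorial : ℝ) * ((k.2:ℝ)^2 * a ^ k.2 / (k.2.factorial : ℝ)))
          + (-(2*x/n)) * ((k.1:ℝ) * a ^ k.1 / (k.1.factorial : ℝ) * (a ^ k.2 / (k.2.factorial : ℝ)))
          + (-(2*x/n)) * (a ^ k.1 / (k.1.factorial : ℝ) * ((k.2:ℝ) * a ^ k.2 / (k.2.factorial : ℝ)))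
          + x^2 * (a ^ k.1 / (k.1.factorial : ℝ) * (a ^ k.2 / (k.2.factorial : ℝ))) := by
    intro k
    have h1 := hfac k.1
    have h2 := hfac k.2
    field_simp
    ring
  have sA : Summable (fun k : ℕ × ℕ =>
      (1/(n:ℝ)^2) * ((k.1:ℝ)^2 * a ^ k.1 / (k.1.factorial : ℝ) * (a ^ k.2 / (k.2.factorial : ℝ)))) :=
    (summable_mul_of_summable_norm hu2n hun).mul_left _
  have sB : Summable (fun k : ℕ × ℕ =>
      (2/(n:ℝ)^2) * ((k.1:ℝ) * a ^ k.1 / (k.1.factorial : ℝ) * ((k.2:ℝ) * a ^ k.2 / (k.2.factorial : ℝ)))) :=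
    (summable_mul_of_summable_norm hu1n hu1n).mul_left _
  have sC : Summable (fun k : ℕ × ℕ =>
      (1/(n:ℝ)^2) * (a ^ k.1 / (k.1.factorial : ℝ) * ((k.2:ℝ)^2 * a ^ k.2 / (k.2.factorial : ℝ)))) :=
    (summable_mul_of_summable_norm hun hu2n).mul_left _
  have sD : Summable (fun k : ℕ × ℕ =>
      (-(2*x/n)) * ((k.1:ℝ) * a ^ k.1 / (k.1.factorial : ℝ) * (a ^ k.2 / (k.2.factorial : ℝ)))) :=
    (summable_mul_of_summable_norm hu1n hun).mul_left _
  have sE : Summable (fun k : ℕ × ℕ =>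
      (-(2*x/n)) * (a ^ k.1 / (k.1.factorial : ℝ) * ((k.2:ℝ) * a ^ k.2 / (k.2.factorial : ℝ)))) :=
    (summable_mul_of_summable_norm hun hu1n).mul_left _
  have sF : Summable (fun k : ℕ × ℕ =>
      x^2 * (a ^ k.1 / (k.1.factorial : ℝ) * (a ^ k.2 / (k.2.factorial : ℝ)))) :=
    (summable_mul_of_summable_norm hun hun).mul_left _
  have hq_sum : Summable (fun k : ℕ × ℕ =>
      a ^ k.1 / (k.1.factorial : ℝ) * (a ^ k.2 / (k.2.factorial : ℝ))
        * (((k.1:ℝ) + (k.2:ℝ)) / n - x)^2) := by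
    exact ((((((sA.add sB).add sC).add sD).add sE).add sF)).congr fun k => (hq_eq k).symm
  have hq_tsum : ∑' k : ℕ × ℕ, a ^ k.1 / (k.1.factorial : ℝ) * (a ^ k.2 / (k.2.factorial : ℝ))
      * (((k.1:ℝ) + (k.2:ℝ)) / n - x)^2 = (Real.exp a * Real.exp a) * V := by
    rw [tsum_congr hq_eq,
      Summable.tsum_add ((((sA.add sB).add sC).add sD).add sE) sF,
      Summable.tsum_add (((sA.add sB).add sC).add sD) sE,
      Summable.tsum_add ((sA.add sB).add sC) sD,
      Summable.tsum_add (sA.add sB) sC,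
      Summable.tsum_add sA sB,
      tsum_mul_left, tsum_mul_left, tsum_mul_left, tsum_mul_left, tsum_mul_left, tsum_mul_left,
      tsum_prod_mul _ _ hu2n hun, tsum_prod_mul _ _ hu1n hu1n, tsum_prod_mul _ _ hun hu2n,
      tsum_prod_mul _ _ hu1n hun, tsum_prod_mul _ _ hun hu1n, tsum_prod_mul _ _ hun hun,
      tsum_exp0, tsum_exp1, tsum_exp2, hVdef, hadef]
    field_simp
    ring
  -- mean value bound
  have hMVT : ∀ t : ℝ, 0 ≤ t → |f t - f x| ≤ M1 * |t - x| := by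
    intro t ht
    have := Convex.norm_image_sub_le_of_norm_hasDerivWithin_le hf'
      (fun y hy => by rw [Real.norm_eq_abs]; exact le_ciSup hb' ⟨y, hy⟩)
      (convex_Ici 0) (Set.mem_Ici.mpr hx) (Set.mem_Ici.mpr ht)
    simpa [Real.norm_eq_abs] using this
  have key : ∀ y : ℝ, |y| ≤ (ε^2 + y^2)/(2*ε) := by
    intro y
    rw [le_div_iff₀ (by positivity)]
    nlinarith [sq_nonneg (|y| - ε), sq_abs y, abs_nonneg y]
  have ht0 : ∀ k : ℕ × ℕ, (0:ℝ) ≤ ((k.1:ℝ) + (k.2:ℝ)) / n := fun k => by positivity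
  -- the centered series
  have hbound : ∀ k : ℕ × ℕ,
      ‖a ^ k.1 / (k.1.factorial : ℝ) * (a ^ k.2 / (k.2.factorial : ℝ))
          * (f (((k.1:ℝ) + (k.2:ℝ)) / n) - f x)‖
        ≤ M1/(2*ε) * (ε^2 * (a ^ k.1 / (k.1.factorial : ℝ) * (a ^ k.2 / (k.2.factorial : ℝ)))
            + a ^ k.1 / (k.1.factorial : ℝ) * (a ^ k.2 / (k.2.factorial : ℝ))
              * (((k.1:ℝ) + (k.2:ℝ)) / n - x)^2) := by
    intro k
    rw [Real.norm_eq_abs, abs_mul, abs_of_nonneg (hw0 k)]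
    calc a ^ k.1 / (k.1.factorial : ℝ) * (a ^ k.2 / (k.2.factorial : ℝ))
          * |f (((k.1:ℝ) + (k.2:ℝ)) / n) - f x|
        ≤ a ^ k.1 / (k.1.factorial : ℝ) * (a ^ k.2 / (k.2.factorial : ℝ))
            * (M1 * ((ε^2 + (((k.1:ℝ) + (k.2:ℝ)) / n - x)^2)/(2*ε))) := by
          apply mul_le_mul_of_nonneg_left _ (hw0 k)
          exact le_trans (hMVT _ (ht0 k)) (mul_le_mul_of_nonneg_left (key _) hM1)
      _ = M1/(2*ε) * (ε^2 * (a ^ k.1 / (k.1.factorial : ℝ) * (a ^ k.2 / (k.2.factorial : ℝ)))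
            + a ^ k.1 / (k.1.factorial : ℝ) * (a ^ k.2 / (k.2.factorial : ℝ))
              * (((k.1:ℝ) + (k.2:ℝ)) / n - x)^2) := by
          field_simp
  have hR_sum : Summable (fun k : ℕ × ℕ =>
      M1/(2*ε) * (ε^2 * (a ^ k.1 / (k.1.factorial : ℝ) * (a ^ k.2 / (k.2.factorial : ℝ)))
        + a ^ k.1 / (k.1.factorial : ℝ) * (a ^ k.2 / (k.2.factorial : ℝ))
          * (((k.1:ℝ) + (k.2:ℝ)) / n - x)^2)) :=
    ((hw_sum.mul_left (ε^2)).add hq_sum).mul_left _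
  have hgn : Summable (fun k : ℕ × ℕ =>
      ‖a ^ k.1 / (k.1.factorial : ℝ) * (a ^ k.2 / (k.2.factorial : ℝ))
        * (f (((k.1:ℝ) + (k.2:ℝ)) / n) - f x)‖) :=
    Summable.of_nonneg_of_le (fun k => norm_nonneg _) hbound hR_sum
  have hg_sum : Summable (fun k : ℕ × ℕ =>
      a ^ k.1 / (k.1.factorial : ℝ) * (a ^ k.2 / (k.2.factorial : ℝ))
        * (f (((k.1:ℝ) + (k.2:ℝ)) / n) - f x)) := hgn.of_norm
  -- rewrite Gxk
  have hG : Gxk n f x = Real.exp (-2 - n*x)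
      * ∑' k : ℕ × ℕ, a ^ k.1 / (k.1.factorial : ℝ) * (a ^ k.2 / (k.2.factorial : ℝ))
          * f (((k.1:ℝ) + (k.2:ℝ)) / n) := by
    rw [Gxk]
    congr 1
    refine tsum_congr fun k => ?_
    rw [hadef, pow_add, mul_div_mul_comm]
  have hsplit : ∑' k : ℕ × ℕ, a ^ k.1 / (k.1.factorial : ℝ) * (a ^ k.2 / (k.2.factorial : ℝ))
      * f (((k.1:ℝ) + (k.2:ℝ)) / n)
      = (∑' k : ℕ × ℕ, a ^ k.1 / (k.1.factorial : ℝ) * (a ^ k.2 / (k.2.factorial : ℝ))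
          * (f (((k.1:ℝ) + (k.2:ℝ)) / n) - f x)) + (Real.exp a * Real.exp a) * f x := by
    rw [← hT0, ← tsum_mul_right,
      ← Summable.tsum_add hg_sum (hw_sum.mul_right (f x))]
    exact tsum_congr fun k => by ring
  have hexp : Real.exp (-2 - (n:ℝ)*x) * (Real.exp a * Real.exp a) = 1 := by
    rw [← Real.exp_add, ← Real.exp_add,
      show -2 - (n:ℝ)*x + (a + a) = 0 from by rw [hadef]; ring, Real.exp_zero]
  have hdiff : Gxk n f x - f x = Real.exp (-2 - (n:ℝ)*x)
      * ∑' k : ℕ × ℕ, a ^ k.1 / (k.1.factorial : ℝ) * (a ^ k.2 / (k.2.factorial : ℝ))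
          * (f (((k.1:ℝ) + (k.2:ℝ)) / n) - f x) := by
    rw [hG, hsplit, mul_add, ← mul_assoc, hexp]
    ring
  have hc0 : (0:ℝ) < Real.exp (-2 - (n:ℝ)*x) := Real.exp_pos _
  have habs : |Gxk n f x - f x| ≤ M1 * ε := by
    rw [hdiff, abs_mul, abs_of_pos hc0]
    have hstep : |∑' k : ℕ × ℕ, a ^ k.1 / (k.1.factorial : ℝ) * (a ^ k.2 / (k.2.factorial : ℝ))
        * (f (((k.1:ℝ) + (k.2:ℝ)) / n) - f x)|
        ≤ M1/(2*ε) * (ε^2 * (Real.exp a * Real.exp a) + (Real.exp a * Real.exp a) * V) := by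
      calc |∑' k : ℕ × ℕ, a ^ k.1 / (k.1.factorial : ℝ) * (a ^ k.2 / (k.2.factorial : ℝ))
            * (f (((k.1:ℝ) + (k.2:ℝ)) / n) - f x)|
          ≤ ∑' k : ℕ × ℕ, ‖a ^ k.1 / (k.1.factorial : ℝ) * (a ^ k.2 / (k.2.factorial : ℝ))
              * (f (((k.1:ℝ) + (k.2:ℝ)) / n) - f x)‖ := by
            simpa [Real.norm_eq_abs] using norm_tsum_le_tsum_norm hgn
        _ ≤ ∑' k : ℕ × ℕ, M1/(2*ε) * (ε^2 * (a ^ k.1 / (k.1.factorial : ℝ)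
              * (a ^ k.2 / (k.2.factorial : ℝ)))
              + a ^ k.1 / (k.1.factorial : ℝ) * (a ^ k.2 / (k.2.factorial : ℝ))
                * (((k.1:ℝ) + (k.2:ℝ)) / n - x)^2) := hgn.tsum_le_tsum hbound hR_sum
        _ = M1/(2*ε) * (ε^2 * (Real.exp a * Real.exp a) + (Real.exp a * Real.exp a) * V) := by
            rw [tsum_mul_left, Summable.tsum_add (hw_sum.mul_left (ε^2)) hq_sum, tsum_mul_left,
              hT0, hq_tsum]
    calc Real.exp (-2 - (n:ℝ)*x) * |∑' k : ℕ × ℕ, a ^ k.1 / (k.1.factorial : ℝ)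
          * (a ^ k.2 / (k.2.factorial : ℝ)) * (f (((k.1:ℝ) + (k.2:ℝ)) / n) - f x)|
        ≤ Real.exp (-2 - (n:ℝ)*x)
            * (M1/(2*ε) * (ε^2 * (Real.exp a * Real.exp a) + (Real.exp a * Real.exp a) * V)) :=
          mul_le_mul_of_nonneg_left hstep hc0.le
      _ = M1 * ε := by
          rw [← hε2]
          rw [show Real.exp (-2 - (n:ℝ)*x)
              * (M1/(2*ε) * (ε^2 * (Real.exp a * Real.exp a) + (Real.exp a * Real.exp a) * ε^2))
              = (M1 * ε) * (Real.exp (-2 - (n:ℝ)*x) * (Real.exp a * Real.exp a)) from by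
            field_simp; ring, hexp, mul_one]
  calc |Gxk n f x - f x| ≤ M1 * ε := habs
    _ ≤ M1 * ε + 1/2 * M2 * V :=
      le_add_of_nonneg_right (mul_nonneg (mul_nonneg (by norm_num) hM2) hV.le)
end

section
/- For every real x ≥ 0 and every integer n ≥ 1, (e^{-nx}/2)·Σ_{k₁,k₂≥0, k₁+k₂≥1} ((k₁+k₂)·(nx/2)^{k₁+k₂-1}/(k₁!·k₂!))·((k₁+k₂)/n) = x + 1/n; that is, G_n(e₁;x) = x + 1/n for the operator attached to the multiple Sheffer polynomials (k₁+k₂)·x^{k₁+k₂-1}. -/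
open Finset

lemma hasSum_shift1 {f : ℕ → ℝ} {a : ℝ} (h0 : f 0 = 0)
    (h : HasSum (fun i => f (i + 1)) a) : HasSum f a := by
  refine (hasSum_nat_add_iff' 1).mp ?_
  simpa [h0] using h

lemma hs_exp (z : ℝ) : HasSum (fun j : ℕ => z ^ j / j.factorial) (Real.exp z) := by
  rw [Real.exp_eq_exp_ℝ]; exact NormedSpace.expSeries_div_hasSum_exp z

lemma hs1 (z : ℝ) : HasSum (fun j : ℕ => (j : ℝ) * z ^ j / j.factorial) (z * Real.exp z) := by
  refine hasSum_shift1 (by simp) ?_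
  refine ((hs_exp z).mul_left z).congr_fun fun i => ?_
  have h1 : (i.factorial : ℝ) ≠ 0 := by positivity
  rw [Nat.factorial_succ]
  push_cast
  field_simp
  ring

lemma hs2 (z : ℝ) : HasSum (fun j : ℕ => ((j : ℝ) + 1) * z ^ j / j.factorial)
    ((1 + z) * Real.exp z) := by
  have h := (hs1 z).add (hs_exp z)
  have e : (1 + z) * Real.exp z = z * Real.exp z + Real.exp z := by ring
  rw [e]
  exact h.congr_fun fun j => by ring

lemma hs3 (z : ℝ) : HasSum (fun m : ℕ => (m : ℝ) ^ 2 * z ^ (m - 1) / m.factorial)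
    ((1 + z) * Real.exp z) := by
  refine hasSum_shift1 (by simp) ?_
  refine (hs2 z).congr_fun fun j => ?_
  have h1 : (j.factorial : ℝ) ≠ 0 := by positivity
  rw [Nat.factorial_succ]
  simp only [Nat.add_sub_cancel]
  push_cast
  field_simp

lemma antidiag_fact (m : ℕ) :
    ∑ p ∈ Finset.HasAntidiagonal.antidiagonal m, (1:ℝ) / (p.1.factorial * p.2.factorial)
      = 2 ^ m / m.factorial := by
  rw [Finset.Nat.sum_antidiagonal_eq_sum_range_succ_mk,
    eq_div_iff (by positivity : (m.factorial:ℝ) ≠ 0), Finset.sum_mul]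
  have key : ∀ a ∈ Finset.range (m+1),
      (1:ℝ) / ((a.factorial : ℝ) * ((m-a).factorial : ℝ)) * (m.factorial : ℝ)
        = (m.choose a : ℝ) := by
    intro a ha
    rw [Nat.cast_choose ℝ (Finset.mem_range_succ_iff.1 ha)]
    have h1 : (a.factorial : ℝ) ≠ 0 := by positivity
    have h2 : ((m-a).factorial : ℝ) ≠ 0 := by positivity
    field_simp
  rw [Finset.sum_congr rfl key, ← Nat.cast_sum, Nat.sum_range_choose]
  push_cast; ring

/-- `G_n(e₁;x) = x + 1/n` for the operator attached to the multiple
Sheffer polynomials `(k₁+k₂)·x^{k₁+k₂−1}`. -/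
theorem Gkxk_e1 (x : ℝ) (hx : 0 ≤ x) (n : ℕ) (hn : 1 ≤ n) :
    Real.exp (-(n * x)) / 2 *
        ∑' k : ℕ × ℕ,
          (k.1 + k.2 : ℝ) * (n * x / 2) ^ (k.1 + k.2 - 1) /
            (k.1.factorial * k.2.factorial) * ((k.1 + k.2 : ℝ) / n) =
      x + 1 / n := by
  have hn0 : (n : ℝ) ≠ 0 := by positivity
  set z : ℝ := n * x with hz
  have hz0 : 0 ≤ z := by positivity
  set F : ℕ × ℕ → ℝ := fun k =>
    (k.1 + k.2 : ℝ) * (n * x / 2) ^ (k.1 + k.2 - 1) /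
      (k.1.factorial * k.2.factorial) * ((k.1 + k.2 : ℝ) / n) with hF
  have hFnn : ∀ k, 0 ≤ F k := by
    intro k
    have : (0:ℝ) ≤ n * x / 2 := by positivity
    rw [hF]
    positivity
  -- fiber sums
  set g : ℕ → ℝ := fun m => 2 / n * ((m : ℝ) ^ 2 * z ^ (m - 1) / m.factorial) with hg
  have fiber : ∀ m : ℕ, ∑ p ∈ Finset.HasAntidiagonal.antidiagonal m, F p = g m := by
    intro m
    have hmem : ∀ p ∈ Finset.HasAntidiagonal.antidiagonal m,
        F p = ((m:ℝ)^2 * (n * x / 2) ^ (m - 1) / n) *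
          ((1:ℝ) / (p.1.factorial * p.2.factorial)) := by
      intro p hp
      have hpm : p.1 + p.2 = m := Finset.HasAntidiagonal.mem_antidiagonal.mp hp
      rw [hF]
      simp only [← hpm]
      push_cast
      ring
    rw [Finset.sum_congr rfl hmem, ← Finset.mul_sum, antidiag_fact, hg]
    rcases m with _ | s
    · simp
    · have h2 : (2:ℝ) ^ (s+1) * ((n:ℝ) * x / 2) ^ (s + 1 - 1) = 2 * z ^ (s + 1 - 1) := by
        simp only [Nat.add_sub_cancel, div_pow, hz, pow_succ]
        field_simp
      set w : ℝ := ((n:ℝ) * x / 2) ^ (s + 1 - 1) with hw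
      set zz : ℝ := z ^ (s + 1 - 1) with hzz
      have e1 : ((s+1:ℕ):ℝ) ^ 2 * w / ↑n * ((2:ℝ) ^ (s+1) / ((s+1).factorial : ℝ))
          = (((s+1:ℕ):ℝ) ^ 2 / (↑n * ((s+1).factorial : ℝ))) * ((2:ℝ) ^ (s+1) * w) := by
        ring
      rw [e1, h2]
      ring
  have hg_sum : HasSum g (2 / n * ((1 + z) * Real.exp z)) := by
    rw [hg]; exact (hs3 z).mul_left _
  have fibHS : ∀ m : ℕ, HasSum (fun p : Finset.HasAntidiagonal.antidiagonal m => F (p : ℕ × ℕ)) (g m) := by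
    intro m
    have h := hasSum_fintype (fun p : Finset.HasAntidiagonal.antidiagonal m => F (p : ℕ × ℕ))
    rwa [Finset.sum_coe_sort, fiber m] at h
  have hσ : Summable (fun q : (Σ m : ℕ, Finset.HasAntidiagonal.antidiagonal m) => F (q.2 : ℕ × ℕ)) := by
    apply (summable_sigma_of_nonneg (fun q => hFnn _)).mpr
    refine ⟨fun m => (fibHS m).summable, ?_⟩
    refine hg_sum.summable.congr fun m => ?_
    exact ((fibHS m).tsum_eq).symm
  have hsig : HasSum (fun q : (Σ m : ℕ, Finset.HasAntidiagonal.antidiagonal m) => F (q.2 : ℕ × ℕ))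
      (2 / n * ((1 + z) * Real.exp z)) :=
    HasSum.sigma_of_hasSum hg_sum fibHS hσ
  have hFS : HasSum F (2 / n * ((1 + z) * Real.exp z)) :=
    (Finset.HasAntidiagonal.sigmaAntidiagonalEquivProd.hasSum_iff).mp hsig
  rw [hFS.tsum_eq, Real.exp_neg]
  have hez := Real.exp_ne_zero z
  field_simp
  ring
end

section
/- For every real x ≥ 0 and every integer n ≥ 1, (e^{-nx}/2)·Σ_{k₁,k₂≥0, k₁+k₂≥1} ((k₁+k₂)·(nx/2)^{k₁+k₂-1}/(k₁!·k₂!))·((k₁+k₂)/n)² = x² + 3x/n + 1/n²; that is, G_n(e₂;x) = x² + 3x/n + 1/n² for the operator attached to the multiple Sheffer polynomials (k₁+k₂)·x^{k₁+k₂-1}. -/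
private lemma summable_aux (t : ℝ) (ht : 0 ≤ t) (c : ℕ) :
    Summable (fun k : ℕ => (k : ℝ) ^ c * t ^ k / k.factorial) := by
  refine Summable.of_nonneg_of_le (fun k => by positivity) (fun k => ?_)
    (Real.summable_pow_div_factorial ((2 : ℝ) ^ c * t))
  have h1 : (k : ℝ) ^ c ≤ ((2 : ℝ) ^ c) ^ k := by
    calc (k : ℝ) ^ c ≤ ((2 : ℝ) ^ k) ^ c := by
          refine pow_le_pow_left₀ (Nat.cast_nonneg k) ?_ c
          exact_mod_cast (Nat.lt_two_pow_self (n := k)).le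
    _ = ((2 : ℝ) ^ c) ^ k := by rw [← pow_mul, ← pow_mul, Nat.mul_comm]
  calc (k : ℝ) ^ c * t ^ k / k.factorial ≤ ((2:ℝ)^c) ^ k * t ^ k / k.factorial := by
        gcongr
  _ = ((2:ℝ)^c * t) ^ k / k.factorial := by rw [mul_pow]

private lemma sum_e (t : ℝ) : ∑' k : ℕ, t ^ k / k.factorial = Real.exp t := by
  rw [Real.exp_eq_exp_ℝ, NormedSpace.exp_eq_tsum_div]

private lemma sum1 (t : ℝ) (ht : 0 ≤ t) :
    ∑' k : ℕ, (k : ℝ) * t ^ k / k.factorial = t * Real.exp t := by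
  have hs : Summable (fun k : ℕ => (k:ℝ) * t ^ k / k.factorial) := by
    simpa using summable_aux t ht 1
  rw [Summable.tsum_eq_zero_add hs]
  have hterm : ∀ k : ℕ, ((k+1 : ℕ) : ℝ) * t ^ (k+1) / ((k+1).factorial : ℝ)
      = t * (t ^ k / k.factorial) := by
    intro k
    have h1 : ((k:ℝ)+1) ≠ 0 := by positivity
    have h2 : ((k.factorial : ℝ)) ≠ 0 := by positivity
    rw [Nat.factorial_succ]
    push_cast
    field_simp
    ring
  simp only [hterm]
  rw [tsum_mul_left, sum_e]
  norm_num

private lemma sum2 (t : ℝ) (ht : 0 ≤ t) :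
    ∑' k : ℕ, (k : ℝ) ^ 2 * t ^ k / k.factorial = (t ^ 2 + t) * Real.exp t := by
  have hs : Summable (fun k : ℕ => (k:ℝ) ^ 2 * t ^ k / k.factorial) := summable_aux t ht 2
  have hs1 : Summable (fun k : ℕ => t * ((k:ℝ) * t ^ k / k.factorial)) := by
    refine Summable.mul_left t ?_
    simpa using summable_aux t ht 1
  have hs0 : Summable (fun k : ℕ => t * (t ^ k / k.factorial)) :=
    (Real.summable_pow_div_factorial t).mul_left t
  rw [Summable.tsum_eq_zero_add hs]
  have hterm : ∀ k : ℕ, ((k+1 : ℕ) : ℝ) ^ 2 * t ^ (k+1) / ((k+1).factorial : ℝ)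
      = t * ((k:ℝ) * t ^ k / k.factorial) + t * (t ^ k / k.factorial) := by
    intro k
    have h1 : ((k:ℝ)+1) ≠ 0 := by positivity
    have h2 : ((k.factorial : ℝ)) ≠ 0 := by positivity
    rw [Nat.factorial_succ]
    push_cast
    field_simp
    ring
  simp only [hterm]
  rw [Summable.tsum_add hs1 hs0, tsum_mul_left, tsum_mul_left, sum1 t ht, sum_e]
  norm_num
  ring

private lemma sum3 (t : ℝ) (ht : 0 ≤ t) :
    ∑' k : ℕ, (k : ℝ) ^ 3 * t ^ k / k.factorial
      = (t ^ 3 + 3 * t ^ 2 + t) * Real.exp t := by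
  have hs : Summable (fun k : ℕ => (k:ℝ) ^ 3 * t ^ k / k.factorial) := summable_aux t ht 3
  have hs2 : Summable (fun k : ℕ => t * ((k:ℝ) ^ 2 * t ^ k / k.factorial)) :=
    (summable_aux t ht 2).mul_left t
  have hs1 : Summable (fun k : ℕ => 2 * t * ((k:ℝ) * t ^ k / k.factorial)) := by
    refine Summable.mul_left (2 * t) ?_
    simpa using summable_aux t ht 1
  have hs0 : Summable (fun k : ℕ => t * (t ^ k / k.factorial)) :=
    (Real.summable_pow_div_factorial t).mul_left t
  rw [Summable.tsum_eq_zero_add hs]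
  have hterm : ∀ k : ℕ, ((k+1 : ℕ) : ℝ) ^ 3 * t ^ (k+1) / ((k+1).factorial : ℝ)
      = t * ((k:ℝ) ^ 2 * t ^ k / k.factorial) + 2 * t * ((k:ℝ) * t ^ k / k.factorial)
        + t * (t ^ k / k.factorial) := by
    intro k
    have h1 : ((k:ℝ)+1) ≠ 0 := by positivity
    have h2 : ((k.factorial : ℝ)) ≠ 0 := by positivity
    rw [Nat.factorial_succ]
    push_cast
    field_simp
    ring
  simp only [hterm]
  rw [Summable.tsum_add (hs2.add hs1) hs0, Summable.tsum_add hs2 hs1, tsum_mul_left, tsum_mul_left,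
    tsum_mul_left, sum2 t ht, sum1 t ht, sum_e]
  norm_num
  ring

private lemma tsum_prod_mul_s18 {f g : ℕ → ℝ} (hf : Summable f) (hg : Summable g)
    (h : Summable fun p : ℕ × ℕ => f p.1 * g p.2) :
    ∑' p : ℕ × ℕ, f p.1 * g p.2 = (∑' k, f k) * ∑' k, g k :=
  (Summable.tsum_mul_tsum hf hg h).symm

set_option maxHeartbeats 1000000 in
/-- `G_n(e₂;x) = x² + 3x/n + 1/n²` for the operator attached to the
multiple Sheffer polynomials `(k₁+k₂)·x^{k₁+k₂−1}`. -/
theorem Gkxk_e2 (x : ℝ) (hx : 0 ≤ x) (n : ℕ) (hn : 1 ≤ n) :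
    Real.exp (-(n * x)) / 2 *
        ∑' k : ℕ × ℕ,
          (k.1 + k.2 : ℝ) * (n * x / 2) ^ (k.1 + k.2 - 1) /
            (k.1.factorial * k.2.factorial) * ((k.1 + k.2 : ℝ) / n) ^ 2 =
      x ^ 2 + 3 * x / n + 1 / (n : ℝ) ^ 2 := by
  have hn0 : (n : ℝ) ≠ 0 := by positivity
  rcases hx.eq_or_lt with rfl | hxpos
  · -- x = 0
    simp only [mul_zero, zero_div, neg_zero, Real.exp_zero]
    rw [tsum_eq_sum (s := {((1:ℕ),(0:ℕ)), ((0:ℕ),(1:ℕ))}) ?_]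
    · rw [Finset.sum_insert (by decide), Finset.sum_singleton]
      norm_num [Nat.factorial]
      ring
    · intro b hb
      have hm : b.1 + b.2 = 0 ∨ b.1 + b.2 = 1 ∨ 2 ≤ b.1 + b.2 := by omega
      rcases hm with h | h | h
      · have h1 : b.1 = 0 := by omega
        have h2 : b.2 = 0 := by omega
        rw [h1, h2]; norm_num
      · exfalso
        apply hb
        have hb' : (b.1 = 1 ∧ b.2 = 0) ∨ (b.1 = 0 ∧ b.2 = 1) := by omega
        rcases hb' with ⟨h1, h2⟩ | ⟨h1, h2⟩
        · simp [Finset.mem_insert, Prod.ext_iff, h1, h2]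
        · simp [Finset.mem_insert, Prod.ext_iff, h1, h2]
      · rw [zero_pow (by omega : b.1 + b.2 - 1 ≠ 0)]
        norm_num
  · -- x > 0
    set t : ℝ := (n : ℝ) * x / 2 with ht_def
    have ht : 0 < t := by positivity
    have ht0 : t ≠ 0 := ne_of_gt ht
    have key : ∀ p : ℕ × ℕ,
        (p.1 + p.2 : ℝ) * t ^ (p.1 + p.2 - 1) /
            (p.1.factorial * p.2.factorial) * ((p.1 + p.2 : ℝ) / n) ^ 2
          = 1 / ((n:ℝ) ^ 2 * t) *
            (((p.1:ℝ) ^ 3 * t ^ p.1 / p.1.factorial) * (t ^ p.2 / p.2.factorial)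
            + 3 * (((p.1:ℝ) ^ 2 * t ^ p.1 / p.1.factorial) * ((p.2:ℝ) * t ^ p.2 / p.2.factorial))
            + 3 * (((p.1:ℝ) * t ^ p.1 / p.1.factorial) * ((p.2:ℝ) ^ 2 * t ^ p.2 / p.2.factorial))
            + (t ^ p.1 / p.1.factorial) * ((p.2:ℝ) ^ 3 * t ^ p.2 / p.2.factorial)) := by
      rintro ⟨k1, k2⟩
      rcases Nat.eq_zero_or_pos (k1 + k2) with h | h
      · have h1 : k1 = 0 := by omega
        have h2 : k2 = 0 := by omega
        subst h1; subst h2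
        norm_num
      · have h' : k1 + k2 - 1 + 1 = k1 + k2 := Nat.succ_pred_eq_of_pos h
        have e1 : t ^ (k1 + k2 - 1) = t ^ k1 * t ^ k2 / t := by
          rw [← pow_add]
          conv_rhs => rw [← h', pow_succ, mul_div_cancel_right₀ _ ht0]
        simp only []
        rw [e1]
        have hF1 : ((k1.factorial : ℝ)) ≠ 0 := by positivity
        have hF2 : ((k2.factorial : ℝ)) ≠ 0 := by positivity
        field_simp
        ring
    rw [tsum_congr key, tsum_mul_left]
    have s0 : Summable (fun k : ℕ => t ^ k / (k.factorial : ℝ)) :=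
      Real.summable_pow_div_factorial t
    have s1 : Summable (fun k : ℕ => (k:ℝ) * t ^ k / k.factorial) := by
      simpa using summable_aux t ht.le 1
    have s2 : Summable (fun k : ℕ => (k:ℝ) ^ 2 * t ^ k / k.factorial) := summable_aux t ht.le 2
    have s3 : Summable (fun k : ℕ => (k:ℝ) ^ 3 * t ^ k / k.factorial) := summable_aux t ht.le 3
    have p30 : Summable (fun p : ℕ × ℕ =>
        ((p.1:ℝ) ^ 3 * t ^ p.1 / p.1.factorial) * (t ^ p.2 / p.2.factorial)) :=
      s3.mul_of_nonneg s0 (fun k => by positivity) (fun k => by positivity)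
    have p21 : Summable (fun p : ℕ × ℕ =>
        ((p.1:ℝ) ^ 2 * t ^ p.1 / p.1.factorial) * ((p.2:ℝ) * t ^ p.2 / p.2.factorial)) :=
      s2.mul_of_nonneg s1 (fun k => by positivity) (fun k => by positivity)
    have p12 : Summable (fun p : ℕ × ℕ =>
        ((p.1:ℝ) * t ^ p.1 / p.1.factorial) * ((p.2:ℝ) ^ 2 * t ^ p.2 / p.2.factorial)) :=
      s1.mul_of_nonneg s2 (fun k => by positivity) (fun k => by positivity)
    have p03 : Summable (fun p : ℕ × ℕ =>
        (t ^ p.1 / p.1.factorial) * ((p.2:ℝ) ^ 3 * t ^ p.2 / p.2.factorial)) :=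
      s0.mul_of_nonneg s3 (fun k => by positivity) (fun k => by positivity)
    rw [Summable.tsum_add ((p30.add (p21.mul_left 3)).add (p12.mul_left 3)) p03,
      Summable.tsum_add (p30.add (p21.mul_left 3)) (p12.mul_left 3),
      Summable.tsum_add p30 (p21.mul_left 3), tsum_mul_left, tsum_mul_left,
      tsum_prod_mul_s18 s3 s0 p30, tsum_prod_mul_s18 s2 s1 p21, tsum_prod_mul_s18 s1 s2 p12,
      tsum_prod_mul_s18 s0 s3 p03, sum_e, sum1 t ht.le, sum2 t ht.le, sum3 t ht.le]
    have hneg : -((n:ℝ) * x) = -t + -t := by rw [ht_def]; try ring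
    have hx2 : x = 2 * t / (n:ℝ) := by rw [ht_def]; try field_simp; try ring
    rw [hneg, Real.exp_add, Real.exp_neg, hx2]
    have hE : Real.exp t ≠ 0 := Real.exp_ne_zero _
    field_simp
    ring
end

section
/- For every real x ≥ 0 and every integer n ≥ 1, the second central moment satisfies (e^{-nx}/2)·Σ_{k₁,k₂≥0, k₁+k₂≥1} ((k₁+k₂)·(nx/2)^{k₁+k₂-1}/(k₁!·k₂!))·((k₁+k₂)/n − x)² = x/n + 1/n²; that is, G_n((e₁ − x)²; x) = x/n + 1/n² for the operator attached to the multiple Sheffer polynomials (k₁+k₂)·x^{k₁+k₂-1}, where (e₁ − x)² denotes the function s ↦ (s − x)². -/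
open Real Finset

lemma exp_tsum (c : ℝ) : ∑' k : ℕ, c ^ k / (Nat.factorial k : ℝ) = Real.exp c := by
  rw [Real.exp_eq_exp_ℝ, NormedSpace.exp_eq_tsum_div]

noncomputable def gP (j : ℕ) (c : ℝ) (k : ℕ) : ℝ :=
  (∏ i ∈ Finset.range j, ((k : ℝ) - i)) * c ^ k / (Nat.factorial k : ℝ)

lemma gP_zero_of_lt {j k : ℕ} (h : k < j) (c : ℝ) : gP j c k = 0 := by
  unfold gP
  rw [Finset.prod_eq_zero (Finset.mem_range.mpr h) (by simp)]
  simp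

lemma ff_eq (j : ℕ) : ∀ k : ℕ, (∏ i ∈ Finset.range j, (((k + j : ℕ) : ℝ) - i))
    = (Nat.factorial (k + j) : ℝ) / (Nat.factorial k : ℝ) := by
  induction j with
  | zero =>
    intro k
    simp only [Finset.range_zero, Finset.prod_empty, Nat.add_zero]
    rw [div_self (Nat.cast_ne_zero.mpr (Nat.factorial_ne_zero k))]
  | succ j ih =>
    intro k
    rw [Finset.prod_range_succ]
    simp only [show k + (j + 1) = (k + 1) + j from by omega]
    rw [ih (k + 1)]
    have hne : (Nat.factorial k : ℝ) ≠ 0 := Nat.cast_ne_zero.mpr (Nat.factorial_ne_zero k)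
    have hne1 : (Nat.factorial (k+1) : ℝ) ≠ 0 := Nat.cast_ne_zero.mpr (Nat.factorial_ne_zero _)
    rw [Nat.factorial_succ] at hne1 ⊢
    push_cast
    field_simp
    ring

lemma gP_shift (j : ℕ) (c : ℝ) (k : ℕ) :
    gP j c (k + j) = c ^ j * (c ^ k / (Nat.factorial k : ℝ)) := by
  unfold gP
  rw [ff_eq j k]
  have hne : (Nat.factorial k : ℝ) ≠ 0 := Nat.cast_ne_zero.mpr (Nat.factorial_ne_zero k)
  have hne2 : (Nat.factorial (k + j) : ℝ) ≠ 0 := Nat.cast_ne_zero.mpr (Nat.factorial_ne_zero _)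
  rw [pow_add]
  field_simp

lemma summable_gP (j : ℕ) (c : ℝ) : Summable (gP j c) := by
  rw [← summable_nat_add_iff j]
  exact Summable.congr ((Real.summable_pow_div_factorial c).mul_left (c ^ j))
    (fun k => (gP_shift j c k).symm)

lemma tsum_gP (j : ℕ) (c : ℝ) : ∑' k : ℕ, gP j c k = c ^ j * Real.exp c := by
  rw [← Summable.sum_add_tsum_nat_add j (summable_gP j c),
    Finset.sum_eq_zero (fun i hi => gP_zero_of_lt (Finset.mem_range.mp hi) c), zero_add]
  calc ∑' k : ℕ, gP j c (k + j) = ∑' k : ℕ, c ^ j * (c ^ k / (Nat.factorial k : ℝ)) :=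
        tsum_congr (gP_shift j c)
    _ = c ^ j * ∑' k : ℕ, c ^ k / (Nat.factorial k : ℝ) := tsum_mul_left
    _ = c ^ j * Real.exp c := by rw [exp_tsum]

lemma gP_nonneg (j : ℕ) {c : ℝ} (hc : 0 ≤ c) (k : ℕ) : 0 ≤ gP j c k := by
  rcases lt_or_ge k j with h | h
  · rw [gP_zero_of_lt h]
  · unfold gP
    apply div_nonneg _ (by positivity)
    apply mul_nonneg _ (by positivity)
    apply Finset.prod_nonneg
    intro i hi
    have hik : (i : ℝ) ≤ (k : ℝ) := by
      exact_mod_cast le_trans (le_of_lt (Finset.mem_range.mp hi)) h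
    linarith

lemma hasSum_gP (j : ℕ) (c : ℝ) : HasSum (gP j c) (c ^ j * Real.exp c) :=
  tsum_gP j c ▸ (summable_gP j c).hasSum

lemma hasSum_gP_prod (i j : ℕ) {c : ℝ} (hc : 0 ≤ c) :
    HasSum (fun p : ℕ × ℕ => gP i c p.1 * gP j c p.2)
      (c ^ (i + j) * (Real.exp c * Real.exp c)) := by
  have hs : Summable (fun p : ℕ × ℕ => gP i c p.1 * gP j c p.2) :=
    (summable_gP i c).mul_of_nonneg (summable_gP j c) (gP_nonneg i hc) (gP_nonneg j hc)
  have h := (hasSum_gP i c).mul (hasSum_gP j c) hs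
  have hval : c ^ i * Real.exp c * (c ^ j * Real.exp c)
      = c ^ (i + j) * (Real.exp c * Real.exp c) := by rw [pow_add]; ring
  rwa [hval] at h

/-- the second central moment `G_n((e₁ − x)²;x) = x/n + 1/n²` for the
operator attached to the multiple Sheffer polynomials `(k₁+k₂)·x^{k₁+k₂−1}`. -/
theorem Gkxk_central_moment (x : ℝ) (hx : 0 ≤ x) (n : ℕ) (hn : 1 ≤ n) :
    Real.exp (-(n * x)) / 2 *
        ∑' k : ℕ × ℕ,
          (k.1 + k.2 : ℝ) * (n * x / 2) ^ (k.1 + k.2 - 1) /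
            (k.1.factorial * k.2.factorial) * ((k.1 + k.2 : ℝ) / n - x) ^ 2 =
      x / n + 1 / (n : ℝ) ^ 2 := by
  have hnpos : (0:ℝ) < n := by exact_mod_cast hn
  have hn0 : (n:ℝ) ≠ 0 := ne_of_gt hnpos
  rcases hx.eq_or_lt with rfl | hxpos
  · -- x = 0 case
    rw [tsum_eq_sum (s := {((1:ℕ),(0:ℕ)), ((0:ℕ),(1:ℕ))}) ?_]
    · rw [Finset.sum_pair (by decide)]
      norm_num [Nat.factorial]
      ring
    · rintro ⟨k1, k2⟩ hp
      rcases (by omega : k1 + k2 = 0 ∨ k1 + k2 = 1 ∨ 2 ≤ k1 + k2) with h | h | h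
      · obtain ⟨rfl, rfl⟩ := Nat.add_eq_zero.mp h
        norm_num
      · rcases (by omega : k1 = 1 ∧ k2 = 0 ∨ k1 = 0 ∧ k2 = 1) with ⟨rfl, rfl⟩ | ⟨rfl, rfl⟩ <;>
          simp at hp
      · have : ((n:ℝ) * 0 / 2) = 0 := by ring
        rw [this, zero_pow (by omega : k1 + k2 - 1 ≠ 0)]
        ring
  · have hc : (0:ℝ) < ↑n * x / 2 := by positivity
    set c : ℝ := ↑n * x / 2 with hcdef
    have hF : ∀ p : ℕ × ℕ,
        (p.1 + p.2 : ℝ) * c ^ (p.1 + p.2 - 1) /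
            (p.1.factorial * p.2.factorial) * ((p.1 + p.2 : ℝ) / n - x) ^ 2
        = 1/(c*↑n^2) * (gP 3 c p.1 * gP 0 c p.2 +
            (3*(gP 2 c p.1 * gP 1 c p.2) +
            (3*(gP 1 c p.1 * gP 2 c p.2) +
            (gP 0 c p.1 * gP 3 c p.2 +
            ((3-4*c)*(gP 2 c p.1 * gP 0 c p.2) +
            ((2*(3-4*c))*(gP 1 c p.1 * gP 1 c p.2) +
            ((3-4*c)*(gP 0 c p.1 * gP 2 c p.2) +
            ((1-2*c)^2*(gP 1 c p.1 * gP 0 c p.2) +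
            (1-2*c)^2*(gP 0 c p.1 * gP 1 c p.2))))))))) := by
      rintro ⟨k1, k2⟩
      rcases Nat.eq_zero_or_pos (k1 + k2) with h0 | hpos
      · obtain ⟨rfl, rfl⟩ := Nat.add_eq_zero.mp h0
        norm_num [gP, Finset.prod_range_succ]
      · have hkk : k1 + k2 - 1 + 1 = k1 + k2 := by omega
        have hpow : c ^ (k1 + k2 - 1) = c ^ k1 * c ^ k2 / c := by
          rw [eq_div_iff (ne_of_gt hc), ← pow_succ, hkk, pow_add]
        have hf1 : (Nat.factorial k1 : ℝ) ≠ 0 := Nat.cast_ne_zero.mpr (Nat.factorial_ne_zero _)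
        have hf2 : (Nat.factorial k2 : ℝ) ≠ 0 := Nat.cast_ne_zero.mpr (Nat.factorial_ne_zero _)
        rw [hpow]
        simp only [gP, hcdef, Finset.prod_range_succ, Finset.prod_range_zero]
        have hx0 : x ≠ 0 := ne_of_gt hxpos
        field_simp
        ring
    rw [tsum_congr hF]
    have H := (((hasSum_gP_prod 3 0 hc.le).add
      (((hasSum_gP_prod 2 1 hc.le).mul_left 3).add
      (((hasSum_gP_prod 1 2 hc.le).mul_left 3).add
      ((hasSum_gP_prod 0 3 hc.le).add
      (((hasSum_gP_prod 2 0 hc.le).mul_left (3-4*c)).add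
      (((hasSum_gP_prod 1 1 hc.le).mul_left (2*(3-4*c))).add
      (((hasSum_gP_prod 0 2 hc.le).mul_left (3-4*c)).add
      (((hasSum_gP_prod 1 0 hc.le).mul_left ((1-2*c)^2)).add
      ((hasSum_gP_prod 0 1 hc.le).mul_left ((1-2*c)^2)))))))))).mul_left (1/(c*↑n^2)))
    rw [H.tsum_eq]
    have hE : Real.exp c * Real.exp c = Real.exp (↑n * x) := by
      rw [← Real.exp_add]; congr 1; rw [hcdef]; ring
    rw [hE]
    have hc0 : c ≠ 0 := ne_of_gt hc
    have hval : 1/(c*↑n^2) * (c ^ (3 + 0) * Real.exp (↑n * x) + (3 * (c ^ (2 + 1) * Real.exp (↑n * x)) + (3 * (c ^ (1 + 2) * Real.exp (↑n * x)) + (c ^ (0 + 3) * Real.exp (↑n * x) + ((3-4*c) * (c ^ (2 + 0) * Real.exp (↑n * x)) + ((2*(3-4*c)) * (c ^ (1 + 1) * Real.exp (↑n * x)) + ((3-4*c) * (c ^ (0 + 2) * Real.exp (↑n * x)) + (((1-2*c)^2) * (c ^ (1 + 0) * Real.exp (↑n * x)) + (((1-2*c)^2) * (c ^ (0 + 1)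 * Real.exp (↑n * x))))))))))) = (4*c+2)/↑n^2 * Real.exp (↑n * x) := by
      field_simp
      ring
    rw [hval, Real.exp_neg, hcdef]
    field_simp [Real.exp_ne_zero]
    ring
end
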